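/- Let X be a sequentially complete Hausdorff locally convex space, (T(t))_{t≥0} a strongly continuous locally equicontinuous semigroup on X with generator (A, D(A)), U a Hausdorff locally convex space and B ∈ L(U;X). (a) If for some r > 0 one has (T∗Bf)(r) ∈ D(A) for all f ∈ C([0,r];U), then (T∗Bf)(t) ∈ D(A) for all f ∈ C([0,r];U) and all t ∈ [0,r]. (b) If (T∗Bf)(r) ∈ D(A) for all f ∈ C([0,r];U) holds for some r > 0, then it holds for all r > 0. -/

import Mathlib

open Filter Topology Set Classical
open scoped ENNReal

/-- A partition `a = d₀ < d₁ < ⋯ < dₙ = b` of the interval `[a,b]`. -/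
structure IntervalPartition (a b : ℝ) where
  n : ℕ
  points : ℕ → ℝ
  first_eq : points 0 = a
  last_eq : points n = b
  increasing : ∀ i, i < n → points i < points (i + 1)

section Defs

variable {X Y U : Type*}
variable [AddCommGroup X] [Module ℝ X] [UniformSpace X] [IsUniformAddGroup X] [ContinuousSMul ℝ X]
variable [AddCommGroup Y] [Module ℝ Y] [UniformSpace Y] [IsUniformAddGroup Y] [ContinuousSMul ℝ Y]
variable [AddCommGroup U] [Module ℝ U] [UniformSpace U] [IsUniformAddGroup U] [ContinuousSMul ℝ U]

/-- The semivariation `SV_{q,p}(α)` of `α : [a,b] → L(X;Y)` (value in `ℝ≥0∞`). -/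
noncomputable def SV (α : ℝ → X →L[ℝ] Y) (q : Seminorm ℝ Y) (p : Seminorm ℝ X)
    (a b : ℝ) : ℝ≥0∞ :=
  ⨆ (d : IntervalPartition a b) (x : ℕ → X) (_ : ∀ i, i < d.n → p (x i) ≤ 1),
    ENNReal.ofReal
      (q (∑ i ∈ Finset.range d.n,
        (α (d.points (i + 1)) (x i) - α (d.points i) (x i))))

/-- `α : [a,b] → L(X;Y)` is of bounded semivariation. -/
def BoundedSemivariation (α : ℝ → X →L[ℝ] Y) (a b : ℝ) : Prop :=
  ∀ q : Seminorm ℝ Y, Continuous ⇑q →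
    ∃ p : Seminorm ℝ X, Continuous ⇑p ∧ SV α q p a b < ⊤

/-- `y` is the Riemann–Stieltjes integral `∫_a^b f dα`. -/
def IsRSIntegral (α : ℝ → X →L[ℝ] Y) (f : ℝ → X) (a b : ℝ) (y : Y) : Prop :=
  ∀ q : Seminorm ℝ Y, Continuous ⇑q → ∀ ε : ℝ, 0 < ε → ∃ δ : ℝ, 0 < δ ∧
    ∀ (d : IntervalPartition a b) (c : ℕ → ℝ),
      (∀ i, i < d.n → d.points (i + 1) - d.points i < δ) →
      (∀ i, i < d.n → c i ∈ Set.Icc (d.points i) (d.points (i + 1))) →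
      q ((∑ i ∈ Finset.range d.n,
        (α (d.points (i + 1)) (f (c i)) - α (d.points i) (f (c i)))) - y) < ε

/-- The Riemann–Stieltjes integral `∫_a^b f dα` (junk value `0` if it does not exist). -/
noncomputable def RSIntegral (α : ℝ → X →L[ℝ] Y) (f : ℝ → X) (a b : ℝ) : Y :=
  if h : ∃ y, IsRSIntegral α f a b y then h.choose else 0

/-- `y` is the Riemann integral `∫_a^b f(s) ds`. -/
def IsRiemannIntegral (f : ℝ → X) (a b : ℝ) (y : X) : Prop :=
  ∀ q : Seminorm ℝ X, Continuous ⇑q → ∀ ε : ℝ, 0 < ε → ∃ δ : ℝ, 0 < δ ∧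
    ∀ (d : IntervalPartition a b) (c : ℕ → ℝ),
      (∀ i, i < d.n → d.points (i + 1) - d.points i < δ) →
      (∀ i, i < d.n → c i ∈ Set.Icc (d.points i) (d.points (i + 1))) →
      q ((∑ i ∈ Finset.range d.n, (d.points (i + 1) - d.points i) • f (c i)) - y) < ε

/-- The Riemann integral `∫_a^b f(s) ds` (junk value `0` if it does not exist). -/
noncomputable def riemannIntegral (f : ℝ → X) (a b : ℝ) : X :=
  if h : ∃ y, IsRiemannIntegral f a b y then h.choose else 0

/-- Sequential completeness: every Cauchy sequence converges. -/
def SequentiallyComplete (Z : Type*) [UniformSpace Z] : Prop :=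
  ∀ u : ℕ → Z, CauchySeq u → ∃ z, Filter.Tendsto u Filter.atTop (𝓝 z)

/-- A strongly continuous, locally equicontinuous semigroup. -/
def IsSCLESemigroup (T : ℝ → X →L[ℝ] X) : Prop :=
  T 0 = ContinuousLinearMap.id ℝ X ∧
  (∀ s t : ℝ, 0 ≤ s → 0 ≤ t → T (s + t) = (T s).comp (T t)) ∧
  (∀ x : X, ContinuousOn (fun t => T t x) (Set.Ici (0:ℝ))) ∧
  (∀ q : Seminorm ℝ X, Continuous ⇑q → ∀ t₀ : ℝ, 0 ≤ t₀ →
    ∃ p : Seminorm ℝ X, Continuous ⇑p ∧ ∃ C : ℝ, 0 ≤ C ∧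
      ∀ t ∈ Set.Icc (0:ℝ) t₀, ∀ x : X, q (T t x) ≤ C * p x)

/-- A strongly continuous, quasi-equicontinuous semigroup. -/
def IsSCQESemigroup (T : ℝ → X →L[ℝ] X) : Prop :=
  T 0 = ContinuousLinearMap.id ℝ X ∧
  (∀ s t : ℝ, 0 ≤ s → 0 ≤ t → T (s + t) = (T s).comp (T t)) ∧
  (∀ x : X, ContinuousOn (fun t => T t x) (Set.Ici (0:ℝ))) ∧
  (∃ ω : ℝ, ∀ q : Seminorm ℝ X, Continuous ⇑q →
    ∃ p : Seminorm ℝ X, Continuous ⇑p ∧ ∃ C : ℝ, 0 ≤ C ∧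
      ∀ t : ℝ, 0 ≤ t → ∀ x : X, q (Real.exp (-ω * t) • T t x) ≤ C * p x)

/-- The domain of the generator of a semigroup. -/
def genDomain (T : ℝ → X →L[ℝ] X) : Set X :=
  {x | ∃ y : X, Filter.Tendsto (fun t : ℝ => t⁻¹ • (T t x - x)) (𝓝[>] (0:ℝ)) (𝓝 y)}

/-- The generator of a semigroup (junk value `0` outside of its domain). -/
noncomputable def generator (T : ℝ → X →L[ℝ] X) (x : X) : X :=
  if h : ∃ y : X, Filter.Tendsto (fun t : ℝ => t⁻¹ • (T t x - x)) (𝓝[>] (0:ℝ)) (𝓝 y)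
  then h.choose else 0

/-- The convolution `(T∗f)(t) = ∫_0^t T(t-s) f(s) ds`. -/
noncomputable def sgConv (T : ℝ → X →L[ℝ] X) (f : ℝ → X) (t : ℝ) : X :=
  riemannIntegral (fun s => T (t - s) (f s)) 0 t

/-- `v` is the derivative of `u` at `t` within the set `s` (limit of difference quotients). -/
def HasDerivWithinSetLC (u : ℝ → X) (v : X) (s : Set ℝ) (t : ℝ) : Prop :=
  Filter.Tendsto (fun h : ℝ => h⁻¹ • (u (t + h) - u t))
    (𝓝[{h : ℝ | h ≠ 0 ∧ t + h ∈ s}] (0:ℝ)) (𝓝 v)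

/-- `u` is continuously differentiable on `s` with derivative `u'`. -/
def IsC1On (u u' : ℝ → X) (s : Set ℝ) : Prop :=
  ContinuousOn u s ∧ ContinuousOn u' s ∧ ∀ t ∈ s, HasDerivWithinSetLC u (u' t) s t

/-- `u` is a strict solution of `u' = Au + g` on `[0,r]`, `u(0) = x`. -/
def IsStrictSolution (T : ℝ → X →L[ℝ] X) (g : ℝ → X) (x : X) (r : ℝ) (u : ℝ → X) : Prop :=
  u 0 = x ∧ (∀ t ∈ Set.Icc (0:ℝ) r, u t ∈ genDomain T) ∧
  ∃ u' : ℝ → X, IsC1On u u' (Set.Icc (0:ℝ) r) ∧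
    ∀ t ∈ Set.Icc (0:ℝ) r, u' t = generator T (u t) + g t

/-- `(T(t))` satisfies C-maximal regularity for `(B,r)`. -/
def CMaxReg (T : ℝ → X →L[ℝ] X) (B : U →L[ℝ] X) (r : ℝ) : Prop :=
  ∀ f : ℝ → U, ContinuousOn f (Set.Icc (0:ℝ) r) →
    (∀ t ∈ Set.Icc (0:ℝ) r, sgConv T (fun s => B (f s)) t ∈ genDomain T) ∧
    ContinuousOn (fun t => generator T (sgConv T (fun s => B (f s)) t)) (Set.Icc (0:ℝ) r)

end Defs

open scoped NNReal

section SeminormHelpers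
variable {X : Type*}
variable [AddCommGroup X] [Module ℝ X] [UniformSpace X] [IsUniformAddGroup X] [ContinuousSMul ℝ X]
set_option linter.unusedSectionVars false
variable [LocallyConvexSpace ℝ X]

theorem exists_seminorm_nhds {V : Set X} (hV : V ∈ 𝓝 (0:X)) :
    ∃ q : Seminorm ℝ X, Continuous ⇑q ∧ ∀ x, q x < 1 → x ∈ V := by
  have hws : WithSeminorms (gaugeSeminormFamily ℝ X) := with_gaugeSeminormFamily
  rcases hws.hasBasis_zero_ball.mem_iff.mp hV with ⟨⟨s, r⟩, hr, hball⟩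
  set P : Seminorm ℝ X := s.sup (gaugeSeminormFamily ℝ X) with hP
  have hr' : (0:ℝ) < r := hr
  have hPc : Continuous ⇑P := by
    refine Seminorm.continuous (r := r) ?_
    exact hws.hasBasis_zero_ball.mem_of_mem (by exact hr)
  set c : ℝ≥0 := ⟨r⁻¹, by positivity⟩ with hc
  refine ⟨c • P, ?_, ?_⟩
  · have : ⇑(c • P) = fun x => r⁻¹ * P x := rfl
    rw [this]; exact continuous_const.mul hPc
  · intro x hx
    apply hball
    have hx' : r⁻¹ * P x < 1 := hx
    have hPx : P x < r := by
      calc P x = r * (r⁻¹ * P x) := by field_simp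
        _ < r * 1 := by exact (mul_lt_mul_iff_right₀ hr').mpr hx'
        _ = r := mul_one r
    simpa [Seminorm.mem_ball, sub_zero] using hPx

theorem tendsto_of_seminorms {α : Type*} {l : Filter α} {F : α → X} {y : X}
    (h : ∀ q : Seminorm ℝ X, Continuous ⇑q → ∀ ε : ℝ, 0 < ε → ∀ᶠ a in l, q (F a - y) < ε) :
    Tendsto F l (𝓝 y) := by
  rw [← tendsto_sub_nhds_zero_iff]
  intro V hV
  rw [Filter.mem_map]
  rcases exists_seminorm_nhds hV with ⟨q, hqc, hq⟩
  filter_upwards [h q hqc 1 one_pos] with a ha using hq _ ha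

theorem seminorms_tendsto {α : Type*} {l : Filter α} {F : α → X} {y : X}
    (h : Tendsto F l (𝓝 y)) (q : Seminorm ℝ X) (hqc : Continuous ⇑q) {ε : ℝ} (hε : 0 < ε) :
    ∀ᶠ a in l, q (F a - y) < ε := by
  have h2 : Tendsto (fun a => q (F a - y)) l (𝓝 (q (y - y))) :=
    (hqc.tendsto _).comp (h.sub tendsto_const_nhds)
  simp only [sub_self, map_zero] at h2
  exact h2 (Iio_mem_nhds hε)

theorem eq_zero_of_seminorms [T2Space X] {x : X} (h : ∀ q : Seminorm ℝ X, Continuous ⇑q → q x = 0) :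
    x = 0 := by
  by_contra hx
  have hV : ({x}ᶜ : Set X) ∈ 𝓝 (0:X) :=
    (isOpen_compl_singleton).mem_nhds (by simpa using (Ne.symm hx))
  rcases exists_seminorm_nhds hV with ⟨q, hqc, hq⟩
  have := hq x (by rw [h q hqc]; norm_num)
  simp at this

theorem seminorm_sum_le {ι : Type*} (q : Seminorm ℝ X) (s : Finset ι) (f : ι → X) :
    q (∑ i ∈ s, f i) ≤ ∑ i ∈ s, q (f i) := by
  classical
  induction s using Finset.cons_induction with
  | empty => simp
  | cons a s ha ih =>
    rw [Finset.sum_cons, Finset.sum_cons]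
    exact le_trans (map_add_le_add q _ _) (by linarith)

theorem cauchySeq_of_seminorms {u : ℕ → X}
    (h : ∀ q : Seminorm ℝ X, Continuous ⇑q → ∀ ε : ℝ, 0 < ε →
      ∃ N, ∀ m, N ≤ m → ∀ n, N ≤ n → q (u m - u n) < ε) : CauchySeq u := by
  refine ⟨Filter.map_neBot, ?_⟩
  rw [uniformity_eq_comap_nhds_zero X, ← Filter.map_le_iff_le_comap]
  intro V hV
  rcases exists_seminorm_nhds hV with ⟨q, hqc, hq⟩
  rcases h q hqc 1 one_pos with ⟨N, hN⟩
  rw [Filter.mem_map]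
  refine Filter.mem_of_superset (Filter.prod_mem_prod
    (Filter.image_mem_map (Filter.mem_atTop N)) (Filter.image_mem_map (Filter.mem_atTop N))) ?_
  rintro ⟨x1, x2⟩ ⟨⟨m, hm, rfl⟩, ⟨n, hn, rfl⟩⟩
  exact hq _ (hN _ hn _ hm)

end SeminormHelpers

namespace IntervalPartition
variable {a b : ℝ}

theorem mono (d : IntervalPartition a b) : ∀ {i j : ℕ}, i ≤ j → j ≤ d.n → d.points i ≤ d.points j := by
  intro i j hij hjn
  induction j with
  | zero => simp_all
  | succ j ih =>
    rcases Nat.lt_or_ge i (j+1) with hlt | hge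
    · have h1 : d.points i ≤ d.points j := ih (Nat.lt_succ_iff.mp hlt) (le_trans (Nat.le_succ j) hjn)
      exact le_trans h1 (le_of_lt (d.increasing j (Nat.lt_of_succ_le hjn)))
    · have : i = j + 1 := le_antisymm hij hge
      simp [this]

theorem strictMono (d : IntervalPartition a b) {i j : ℕ} (hij : i < j) (hjn : j ≤ d.n) :
    d.points i < d.points j := by
  have h1 : d.points i ≤ d.points (j - 1) := d.mono (Nat.le_sub_one_of_lt hij)
    (le_trans (Nat.sub_le j 1) hjn)
  have h2 : d.points (j - 1) < d.points (j - 1 + 1) := d.increasing _ (by omega)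
  have : j - 1 + 1 = j := by omega
  rw [this] at h2
  exact lt_of_le_of_lt h1 h2

theorem a_le_b (d : IntervalPartition a b) : a ≤ b := by
  have h := d.mono (Nat.zero_le d.n) le_rfl
  rw [d.first_eq, d.last_eq] at h; exact h

theorem points_mem (d : IntervalPartition a b) {i : ℕ} (hi : i ≤ d.n) : d.points i ∈ Set.Icc a b := by
  have h1 := d.mono (Nat.zero_le i) hi
  have h2 := d.mono hi le_rfl
  rw [d.first_eq] at h1; rw [d.last_eq] at h2
  exact ⟨h1, h2⟩

theorem n_eq_zero (d : IntervalPartition a a) : d.n = 0 := by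
  by_contra h
  have := d.strictMono (Nat.pos_of_ne_zero h) le_rfl
  rw [d.first_eq, d.last_eq] at this
  exact lt_irrefl a this

/-- The trivial partition of `[a,a]`. -/
def trivialP (a : ℝ) : IntervalPartition a a := ⟨0, fun _ => a, rfl, rfl, by omega⟩

/-- The uniform partition of `[a,b]` into `k` pieces. -/
noncomputable def unifP (a b : ℝ) (hab : a < b) (k : ℕ) (hk : 0 < k) : IntervalPartition a b where
  n := k
  points := fun i => a + i * ((b - a) / k)
  first_eq := by simp
  last_eq := by
    have hk' : (k:ℝ) ≠ 0 := by exact_mod_cast hk.ne'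
    field_simp
    ring
  increasing := by
    intro i hi
    have hk' : (0:ℝ) < (k:ℝ) := by exact_mod_cast hk
    have h : (0:ℝ) < (b - a) / k := div_pos (by linarith) hk' 
    have : (i:ℝ) < (i:ℝ) + 1 := by linarith
    push_cast
    nlinarith

theorem unifP_points (a b : ℝ) (hab : a < b) (k : ℕ) (hk : 0 < k) (i : ℕ) :
    (unifP a b hab k hk).points i = a + i * ((b - a) / k) := rfl

theorem unifP_gap (a b : ℝ) (hab : a < b) (k : ℕ) (hk : 0 < k) (i : ℕ) :
    (unifP a b hab k hk).points (i+1) - (unifP a b hab k hk).points i = (b - a) / k := by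
  simp only [unifP_points]; push_cast; ring

/-- Glue two partitions. -/
def glue {c : ℝ} (d₁ : IntervalPartition a c) (d₂ : IntervalPartition c b) : IntervalPartition a b where
  n := d₁.n + d₂.n
  points := fun i => if i < d₁.n then d₁.points i else d₂.points (i - d₁.n)
  first_eq := by
    by_cases h : 0 < d₁.n
    · simp [h, d₁.first_eq]
    · have h0 : d₁.n = 0 := by omega
      have hac : a = c := by
        have h1 := d₁.first_eq
        have h2 := d₁.last_eq
        rw [h0] at h2; rw [h1] at h2; exact h2
      simp [h, d₂.first_eq, hac]
  last_eq := by
    have : ¬ (d₁.n + d₂.n < d₁.n) := by omega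
    simp [this, d₂.last_eq]
  increasing := by
    intro i hi
    by_cases h1 : i + 1 < d₁.n
    · simp only [if_pos h1, if_pos (by omega : i < d₁.n)]
      exact d₁.increasing i (by omega)
    · by_cases h2 : i < d₁.n
      · have he : i + 1 = d₁.n := by omega
        have hd := d₁.increasing i (by omega)
        rw [he, d₁.last_eq] at hd
        simp only [if_pos h2, if_neg h1, he, Nat.sub_self, d₂.first_eq, lt_irrefl, if_neg (lt_irrefl d₁.n)]
        exact hd
      · simp only [if_neg h1, if_neg h2]
        have : i + 1 - d₁.n = (i - d₁.n) + 1 := by omega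
        rw [this]
        exact d₂.increasing _ (by omega)

theorem glue_n {c : ℝ} (d₁ : IntervalPartition a c) (d₂ : IntervalPartition c b) :
    (glue d₁ d₂).n = d₁.n + d₂.n := rfl

theorem glue_points_left {c : ℝ} (d₁ : IntervalPartition a c) (d₂ : IntervalPartition c b) {i : ℕ}
    (hi : i ≤ d₁.n) : (glue d₁ d₂).points i = d₁.points i := by
  by_cases h : i < d₁.n
  · simp [glue, h]
  · have hi' : i = d₁.n := by omega
    subst hi'
    simp only [glue, lt_irrefl, if_neg (lt_irrefl d₁.n), Nat.sub_self, d₂.first_eq, d₁.last_eq]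
    simp

theorem glue_points_right {c : ℝ} (d₁ : IntervalPartition a c) (d₂ : IntervalPartition c b) (j : ℕ) :
    (glue d₁ d₂).points (d₁.n + j) = d₂.points j := by
  by_cases h : j = 0
  · subst h
    have h1 := glue_points_left d₁ d₂ (le_refl d₁.n)
    rw [d₁.last_eq] at h1
    rw [Nat.add_zero, h1, d₂.first_eq]
  · have h2 : ¬ (d₁.n + j < d₁.n) := by omega
    simp [glue, h2]

end IntervalPartition

section RI
variable {X Y : Type*}
variable [AddCommGroup X] [Module ℝ X] [UniformSpace X] [IsUniformAddGroup X] [ContinuousSMul ℝ X]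
variable [AddCommGroup Y] [Module ℝ Y] [UniformSpace Y] [IsUniformAddGroup Y] [ContinuousSMul ℝ Y]
variable {a b c : ℝ} {f g : ℝ → X} {y z : X}

set_option linter.unusedSectionVars false

/-- Arbitrarily fine tagged partitions exist. -/
theorem exists_fine_tagged (hab : a ≤ b) {δ : ℝ} (hδ : 0 < δ) :
    ∃ (d : IntervalPartition a b) (c : ℕ → ℝ),
      (∀ i, i < d.n → d.points (i + 1) - d.points i < δ) ∧
      (∀ i, i < d.n → c i ∈ Set.Icc (d.points i) (d.points (i + 1))) := by
  rcases eq_or_lt_of_le hab with rfl | hab'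
  · refine ⟨IntervalPartition.trivialP a, fun _ => a, ?_, ?_⟩ <;> · intro i hi; simp [IntervalPartition.trivialP] at hi
  · set k : ℕ := ⌈(b - a) / δ⌉₊ + 1 with hk
    have hk0 : 0 < k := Nat.succ_pos _
    have hkℝ : (b - a) / δ < k := by
      calc (b-a)/δ ≤ (⌈(b - a) / δ⌉₊ : ℝ) := Nat.le_ceil _
      _ < k := by rw [hk]; push_cast; linarith
    have hgap : (b - a) / k < δ := by
      have hkpos : (0:ℝ) < k := by exact_mod_cast hk0
      rw [div_lt_iff₀ hkpos]
      rw [div_lt_iff₀ hδ] at hkℝ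
      linarith
    refine ⟨IntervalPartition.unifP a b hab' k hk0, fun i => (IntervalPartition.unifP a b hab' k hk0).points i,
      ?_, ?_⟩
    · intro i hi; rw [IntervalPartition.unifP_gap]; exact hgap
    · intro i hi
      exact ⟨le_rfl, le_of_lt ((IntervalPartition.unifP a b hab' k hk0).increasing i hi)⟩

variable [LocallyConvexSpace ℝ X] [T2Space X]

theorem IsRiemannIntegral.unique (hab : a ≤ b) (h1 : IsRiemannIntegral f a b y)
    (h2 : IsRiemannIntegral f a b z) : y = z := by
  have : ∀ q : Seminorm ℝ X, Continuous ⇑q → q (y - z) = 0 := by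
    intro q hq
    have key : ∀ ε : ℝ, 0 < ε → q (y - z) < ε := by
      intro ε hε
      rcases h1 q hq (ε/2) (by linarith) with ⟨δ₁, hδ₁, H1⟩
      rcases h2 q hq (ε/2) (by linarith) with ⟨δ₂, hδ₂, H2⟩
      rcases exists_fine_tagged hab (lt_min hδ₁ hδ₂) with ⟨d, cc, hfine, htag⟩
      have e1 := H1 d cc (fun i hi => lt_of_lt_of_le (hfine i hi) (min_le_left _ _)) htag
      have e2 := H2 d cc (fun i hi => lt_of_lt_of_le (hfine i hi) (min_le_right _ _)) htag
      set S := (∑ i ∈ Finset.range d.n, (d.points (i + 1) - d.points i) • f (cc i))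
      have hyz : y - z = (S - z) - (S - y) := by abel
      have : q (y - z) ≤ q (S - z) + q (S - y) := by
        rw [hyz]; exact map_sub_le_add q _ _
      linarith
    have h0 : q (y - z) ≤ 0 := by
      by_contra hcon
      push_neg at hcon
      exact lt_irrefl _ (key _ hcon)
    exact le_antisymm h0 (apply_nonneg q _)
  have := eq_zero_of_seminorms this
  exact sub_eq_zero.mp this

theorem IsRiemannIntegral.zero_of_degenerate (h : IsRiemannIntegral f a a y) : y = 0 := by
  refine (h.unique le_rfl ?_)
  intro q hq ε hε
  refine ⟨1, one_pos, fun d cc _ _ => ?_⟩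
  have hd : d.n = 0 := d.n_eq_zero
  simp [hd, hε]

theorem isRiemannIntegral_degenerate (f : ℝ → X) (a : ℝ) : IsRiemannIntegral f a a 0 := by
  intro q hq ε hε
  refine ⟨1, one_pos, fun d cc _ _ => ?_⟩
  have hd : d.n = 0 := d.n_eq_zero
  simp [hd, hε]

theorem IsRiemannIntegral.congr_fun (hab : a ≤ b) (hfg : ∀ s ∈ Set.Icc a b, f s = g s)
    (h : IsRiemannIntegral f a b y) : IsRiemannIntegral g a b y := by
  intro q hq ε hε
  rcases h q hq ε hε with ⟨δ, hδ, H⟩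
  refine ⟨δ, hδ, fun d cc hfine htag => ?_⟩
  have hsum : (∑ i ∈ Finset.range d.n, (d.points (i + 1) - d.points i) • g (cc i))
      = (∑ i ∈ Finset.range d.n, (d.points (i + 1) - d.points i) • f (cc i)) := by
    refine Finset.sum_congr rfl fun i hi => ?_
    rw [Finset.mem_range] at hi
    have hcc := htag i hi
    have h1 := d.points_mem (le_of_lt hi)
    have h2 := d.points_mem (Nat.succ_le_of_lt hi)
    have : cc i ∈ Set.Icc a b := ⟨le_trans h1.1 hcc.1, le_trans hcc.2 h2.2⟩
    rw [hfg _ this]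
  rw [hsum]
  exact H d cc hfine htag

end RI

section RI2
variable {X Y : Type*}
variable [AddCommGroup X] [Module ℝ X] [UniformSpace X] [IsUniformAddGroup X] [ContinuousSMul ℝ X]
variable [LocallyConvexSpace ℝ X] [T2Space X]
variable [AddCommGroup Y] [Module ℝ Y] [UniformSpace Y] [IsUniformAddGroup Y] [ContinuousSMul ℝ Y]
variable {a b c : ℝ} {f g : ℝ → X} {y z : X}
set_option linter.unusedSectionVars false

theorem IsRiemannIntegral.map (L : X →L[ℝ] Y) (h : IsRiemannIntegral f a b y) :
    IsRiemannIntegral (fun s => L (f s)) a b (L y) := by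
  intro q hq ε hε
  have hqL : Continuous ⇑(q.comp (L : X →ₗ[ℝ] Y)) := by
    have : ⇑(q.comp (L : X →ₗ[ℝ] Y)) = ⇑q ∘ ⇑L := rfl
    rw [this]
    exact hq.comp L.continuous
  rcases h (q.comp (L : X →ₗ[ℝ] Y)) hqL ε hε with ⟨δ, hδ, H⟩
  refine ⟨δ, hδ, fun d cc hfine htag => ?_⟩
  have key := H d cc hfine htag
  have hL : (∑ i ∈ Finset.range d.n, (d.points (i + 1) - d.points i) • L (f (cc i))) - L y
      = L ((∑ i ∈ Finset.range d.n, (d.points (i + 1) - d.points i) • f (cc i)) - y) := by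
    rw [map_sub, map_sum]
    simp [map_smul]
  rw [show (∑ i ∈ Finset.range d.n, (d.points (i + 1) - d.points i) • (fun s => L (f s)) (cc i))
      = (∑ i ∈ Finset.range d.n, (d.points (i + 1) - d.points i) • L (f (cc i))) from rfl, hL]
  exact key

theorem IsRiemannIntegral.sub (h1 : IsRiemannIntegral f a b y) (h2 : IsRiemannIntegral g a b z) :
    IsRiemannIntegral (fun s => f s - g s) a b (y - z) := by
  intro q hq ε hε
  rcases h1 q hq (ε/2) (by linarith) with ⟨δ₁, hδ₁, H1⟩
  rcases h2 q hq (ε/2) (by linarith) with ⟨δ₂, hδ₂, H2⟩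
  refine ⟨min δ₁ δ₂, lt_min hδ₁ hδ₂, fun d cc hfine htag => ?_⟩
  have e1 := H1 d cc (fun i hi => lt_of_lt_of_le (hfine i hi) (min_le_left _ _)) htag
  have e2 := H2 d cc (fun i hi => lt_of_lt_of_le (hfine i hi) (min_le_right _ _)) htag
  have hsplit : (∑ i ∈ Finset.range d.n, (d.points (i + 1) - d.points i) • (f (cc i) - g (cc i)))
      - (y - z) = ((∑ i ∈ Finset.range d.n, (d.points (i + 1) - d.points i) • f (cc i)) - y)
      - ((∑ i ∈ Finset.range d.n, (d.points (i + 1) - d.points i) • g (cc i)) - z) := by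
    simp only [smul_sub]
    rw [Finset.sum_sub_distrib]
    abel
  rw [show (∑ i ∈ Finset.range d.n, (d.points (i + 1) - d.points i) • (fun s => f s - g s) (cc i))
      = (∑ i ∈ Finset.range d.n, (d.points (i + 1) - d.points i) • (f (cc i) - g (cc i))) from rfl,
    hsplit]
  exact lt_of_le_of_lt (map_sub_le_add q _ _) (by linarith)

theorem isRiemannIntegral_const (v : X) (a b : ℝ) :
    IsRiemannIntegral (fun _ => v) a b ((b - a) • v) := by
  intro q hq ε hε
  refine ⟨1, one_pos, fun d cc _ _ => ?_⟩
  have hs : (∑ i ∈ Finset.range d.n, (d.points (i + 1) - d.points i) • v) = (b - a) • v := by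
    rw [← Finset.sum_smul, Finset.sum_range_sub (fun i => d.points i), d.last_eq, d.first_eq]
  rw [show (∑ i ∈ Finset.range d.n, (d.points (i + 1) - d.points i) • (fun _ => v) (cc i))
      = (∑ i ∈ Finset.range d.n, (d.points (i + 1) - d.points i) • v) from rfl, hs]
  simpa using hε

theorem IsRiemannIntegral.seminorm_bound (hab : a ≤ b) (q : Seminorm ℝ X) (hq : Continuous ⇑q)
    {M : ℝ} (hM : ∀ s ∈ Set.Icc a b, q (f s) ≤ M) (h : IsRiemannIntegral f a b y) :
    q y ≤ (b - a) * M := by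
  rcases eq_or_lt_of_le hab with rfl | hab'
  · rw [h.zero_of_degenerate]
    simp
  have hM0 : 0 ≤ M := le_trans (apply_nonneg q _) (hM a ⟨le_rfl, hab⟩)
  have key : ∀ ε : ℝ, 0 < ε → q y ≤ (b - a) * M + ε := by
    intro ε hε
    rcases h q hq ε hε with ⟨δ, hδ, H⟩
    rcases exists_fine_tagged hab hδ with ⟨d, cc, hfine, htag⟩
    have e1 := H d cc hfine htag
    set S := (∑ i ∈ Finset.range d.n, (d.points (i + 1) - d.points i) • f (cc i)) with hS
    have hqS : q S ≤ (b - a) * M := by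
      refine le_trans (seminorm_sum_le q _ _) ?_
    -- bound each term
      have hterm : ∀ i ∈ Finset.range d.n,
          q ((d.points (i + 1) - d.points i) • f (cc i))
            ≤ (d.points (i + 1) - d.points i) * M := by
        intro i hi
        rw [Finset.mem_range] at hi
        have hgap : 0 ≤ d.points (i + 1) - d.points i := by
          linarith [d.increasing i hi]
        have hcc : cc i ∈ Set.Icc a b := by
          have h1 := (d.points_mem (le_of_lt hi)).1
          have h2 := (d.points_mem (Nat.succ_le_of_lt hi)).2
          have h3 := htag i hi
          exact ⟨le_trans h1 h3.1, le_trans h3.2 h2⟩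
        calc q ((d.points (i + 1) - d.points i) • f (cc i))
            = |d.points (i + 1) - d.points i| * q (f (cc i)) := by
              rw [map_smul_eq_mul]; simp [Real.norm_eq_abs]
          _ = (d.points (i + 1) - d.points i) * q (f (cc i)) := by rw [abs_of_nonneg hgap]
          _ ≤ (d.points (i + 1) - d.points i) * M :=
              mul_le_mul_of_nonneg_left (hM _ hcc) hgap
      refine le_trans (Finset.sum_le_sum hterm) ?_
      rw [← Finset.sum_mul, Finset.sum_range_sub (fun i => d.points i), d.last_eq, d.first_eq]
    have hqy : q y ≤ q S + q (S - y) := by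
      have hy : y = S - (S - y) := by abel
      calc q y = q (S - (S - y)) := by rw [← hy]
        _ ≤ q S + q (S - y) := map_sub_le_add q _ _
    linarith
  by_contra hcon
  push_neg at hcon
  have := key ((q y - (b - a) * M)/2) (by linarith)
  linarith

theorem IsRiemannIntegral.translate (h : IsRiemannIntegral f a b y) (t : ℝ) :
    IsRiemannIntegral (fun s => f (s + t)) (a - t) (b - t) y := by
  intro q hq ε hε
  rcases h q hq ε hε with ⟨δ, hδ, H⟩
  refine ⟨δ, hδ, fun d cc hfine htag => ?_⟩
  let d' : IntervalPartition a b :=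
    { n := d.n
      points := fun i => d.points i + t
      first_eq := by show d.points 0 + t = a; rw [d.first_eq]; ring
      last_eq := by show d.points d.n + t = b; rw [d.last_eq]; ring
      increasing := by
        intro i hi
        show d.points i + t < d.points (i + 1) + t
        have := d.increasing i hi
        linarith }
  have key := H d' (fun i => cc i + t)
    (by
      intro i hi
      show (d.points (i + 1) + t) - (d.points i + t) < δ
      have := hfine i hi
      linarith)
    (by
      intro i hi
      have h3 := htag i hi
      show cc i + t ∈ Set.Icc (d.points i + t) (d.points (i + 1) + t)
      exact ⟨by linarith [h3.1], by linarith [h3.2]⟩)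
  have hsum : (∑ i ∈ Finset.range d'.n, (d'.points (i + 1) - d'.points i) • f ((fun i => cc i + t) i))
      = (∑ i ∈ Finset.range d.n, (d.points (i + 1) - d.points i) • (fun s => f (s + t)) (cc i)) := by
    refine Finset.sum_congr rfl fun i hi => ?_
    show ((d.points (i+1) + t) - (d.points i + t)) • f (cc i + t)
        = (d.points (i + 1) - d.points i) • f (cc i + t)
    congr 1
    ring
  rw [hsum] at key
  exact key

theorem IsRiemannIntegral.reverse (h : IsRiemannIntegral f a b y) :
    IsRiemannIntegral (fun s => f (a + b - s)) a b y := by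
  intro q hq ε hε
  rcases h q hq ε hε with ⟨δ, hδ, H⟩
  refine ⟨δ, hδ, fun d cc hfine htag => ?_⟩
  let d' : IntervalPartition a b :=
    { n := d.n
      points := fun i => a + b - d.points (d.n - i)
      first_eq := by show a + b - d.points (d.n - 0) = a; rw [Nat.sub_zero, d.last_eq]; ring
      last_eq := by show a + b - d.points (d.n - d.n) = b; rw [Nat.sub_self, d.first_eq]; ring
      increasing := by
        intro i hi
        have hi' : i < d.n := hi
        show a + b - d.points (d.n - i) < a + b - d.points (d.n - (i + 1))
        have := d.strictMono (show d.n - (i+1) < d.n - i by omega) (show d.n - i ≤ d.n by omega)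
        linarith }
  have key := H d' (fun i => a + b - cc (d.n - 1 - i))
    (by
      intro i hi
      have hi' : i < d.n := hi
      show (a + b - d.points (d.n - (i+1))) - (a + b - d.points (d.n - i)) < δ
      have e1 : d.n - (i+1) = d.n - 1 - i := by omega
      have e2 : d.n - i = (d.n - 1 - i) + 1 := by omega
      rw [e1, e2]
      have := hfine (d.n - 1 - i) (by omega)
      linarith)
    (by
      intro i hi
      have hi' : i < d.n := hi
      show a + b - cc (d.n - 1 - i) ∈ Set.Icc (a + b - d.points (d.n - i)) (a + b - d.points (d.n - (i+1)))
      have e1 : d.n - (i+1) = d.n - 1 - i := by omega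
      have e2 : d.n - i = (d.n - 1 - i) + 1 := by omega
      rw [e1, e2]
      have h3 := htag (d.n - 1 - i) (by omega)
      exact ⟨by linarith [h3.2], by linarith [h3.1]⟩)
  have hsum : (∑ i ∈ Finset.range d'.n, (d'.points (i + 1) - d'.points i) • f ((fun i => a + b - cc (d.n - 1 - i)) i))
      = (∑ i ∈ Finset.range d.n, (d.points (i + 1) - d.points i) • (fun s => f (a + b - s)) (cc i)) := by
    show (∑ i ∈ Finset.range d.n, ((a + b - d.points (d.n - (i+1))) - (a + b - d.points (d.n - i))) • f (a + b - cc (d.n - 1 - i)))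
      = (∑ i ∈ Finset.range d.n, (d.points (i + 1) - d.points i) • f (a + b - cc i))
    rw [← Finset.sum_range_reflect
      (fun i => (d.points (i + 1) - d.points i) • f (a + b - cc i)) d.n]
    refine Finset.sum_congr rfl fun i hi => ?_
    rw [Finset.mem_range] at hi
    have e1 : d.n - (i+1) = d.n - 1 - i := by omega
    have e2 : d.n - i = (d.n - 1 - i) + 1 := by omega
    rw [e1, e2]
    congr 1
    ring
  rw [hsum] at key
  exact key

end RI2

section RI3
variable {X : Type*}
variable [AddCommGroup X] [Module ℝ X] [UniformSpace X] [IsUniformAddGroup X] [ContinuousSMul ℝ X]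
variable [LocallyConvexSpace ℝ X] [T2Space X]
variable {a b c : ℝ} {f g : ℝ → X} {y y₁ y₂ : X}
set_option linter.unusedSectionVars false

theorem IsRiemannIntegral.additivity (hac : a ≤ c) (hcb : c ≤ b)
    (h1 : IsRiemannIntegral f a c y₁) (h2 : IsRiemannIntegral f c b y₂)
    (h : IsRiemannIntegral f a b y) : y = y₁ + y₂ := by
  have hq0 : ∀ q : Seminorm ℝ X, Continuous ⇑q → q (y - (y₁ + y₂)) = 0 := by
    intro q hq
    have key : ∀ ε : ℝ, 0 < ε → q (y - (y₁ + y₂)) < 3 * ε := by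
      intro ε hε
      rcases h1 q hq ε hε with ⟨δ₁, hδ₁, H1⟩
      rcases h2 q hq ε hε with ⟨δ₂, hδ₂, H2⟩
      rcases h q hq ε hε with ⟨δ, hδ, H⟩
      set δ' := min δ (min δ₁ δ₂) with hδ'
      have hδ'0 : 0 < δ' := lt_min hδ (lt_min hδ₁ hδ₂)
      rcases exists_fine_tagged hac hδ'0 with ⟨d₁, c₁, hf1, ht1⟩
      rcases exists_fine_tagged hcb hδ'0 with ⟨d₂, c₂, hf2, ht2⟩
      set D := IntervalPartition.glue d₁ d₂ with hD
      set C : ℕ → ℝ := fun i => if i < d₁.n then c₁ i else c₂ (i - d₁.n) with hC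
      have hDn : D.n = d₁.n + d₂.n := IntervalPartition.glue_n d₁ d₂
      have hptl : ∀ {i}, i ≤ d₁.n → D.points i = d₁.points i :=
        fun hi => IntervalPartition.glue_points_left d₁ d₂ hi
      have hptr : ∀ j, D.points (d₁.n + j) = d₂.points j :=
        IntervalPartition.glue_points_right d₁ d₂
      have hfineD : ∀ i, i < D.n → D.points (i + 1) - D.points i < δ' := by
        intro i hi
        rw [hDn] at hi
        by_cases hcase : i < d₁.n
        · rw [hptl (by omega), hptl (by omega)]
          exact hf1 i hcase
        · have hj : i - d₁.n < d₂.n := by omega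
          have p1 : D.points i = d₂.points (i - d₁.n) := by
            conv_lhs => rw [show i = d₁.n + (i - d₁.n) from by omega]
            exact hptr _
          have p2 : D.points (i + 1) = d₂.points ((i - d₁.n) + 1) := by
            conv_lhs => rw [show i + 1 = d₁.n + ((i - d₁.n) + 1) from by omega]
            exact hptr _
          rw [p1, p2]
          exact hf2 _ hj
      have htagD : ∀ i, i < D.n → C i ∈ Set.Icc (D.points i) (D.points (i + 1)) := by
        intro i hi
        rw [hDn] at hi
        by_cases hcase : i < d₁.n
        · rw [hptl (by omega : i ≤ d₁.n), hptl (by omega : i + 1 ≤ d₁.n)]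
          simp only [hC, if_pos hcase]
          exact ht1 i hcase
        · have hj : i - d₁.n < d₂.n := by omega
          have p1 : D.points i = d₂.points (i - d₁.n) := by
            conv_lhs => rw [show i = d₁.n + (i - d₁.n) from by omega]
            exact hptr _
          have p2 : D.points (i + 1) = d₂.points ((i - d₁.n) + 1) := by
            conv_lhs => rw [show i + 1 = d₁.n + ((i - d₁.n) + 1) from by omega]
            exact hptr _
          simp only [hC, if_neg hcase]
          rw [p1, p2]
          exact ht2 _ hj
      have hsplit : (∑ i ∈ Finset.range D.n, (D.points (i + 1) - D.points i) • f (C i))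
          = (∑ i ∈ Finset.range d₁.n, (d₁.points (i + 1) - d₁.points i) • f (c₁ i))
            + (∑ i ∈ Finset.range d₂.n, (d₂.points (i + 1) - d₂.points i) • f (c₂ i)) := by
        rw [hDn, Finset.sum_range_add]
        congr 1
        · refine Finset.sum_congr rfl fun i hi => ?_
          rw [Finset.mem_range] at hi
          rw [hptl (by omega : i ≤ d₁.n), hptl (by omega : i + 1 ≤ d₁.n)]
          simp only [hC, if_pos hi]
        · refine Finset.sum_congr rfl fun j hj => ?_
          rw [Finset.mem_range] at hj
          have e2 : d₁.n + j + 1 = d₁.n + (j + 1) := by omega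
          rw [e2, hptr, hptr]
          simp only [hC, if_neg (by omega : ¬ (d₁.n + j < d₁.n)), Nat.add_sub_cancel_left]
      have e0 := H D C (fun i hi => lt_of_lt_of_le (hfineD i hi) (min_le_left _ _)) htagD
      have e1 := H1 d₁ c₁ (fun i hi => lt_of_lt_of_le (hf1 i hi)
        (le_trans (min_le_right _ _) (min_le_left _ _))) ht1
      have e2 := H2 d₂ c₂ (fun i hi => lt_of_lt_of_le (hf2 i hi)
        (le_trans (min_le_right _ _) (min_le_right _ _))) ht2
      set S1 := (∑ i ∈ Finset.range d₁.n, (d₁.points (i + 1) - d₁.points i) • f (c₁ i))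
      set S2 := (∑ i ∈ Finset.range d₂.n, (d₂.points (i + 1) - d₂.points i) • f (c₂ i))
      rw [hsplit] at e0
      have hdecomp : y - (y₁ + y₂) = ((S1 - y₁) + (S2 - y₂)) - ((S1 + S2) - y) := by abel
      calc q (y - (y₁ + y₂)) = q (((S1 - y₁) + (S2 - y₂)) - ((S1 + S2) - y)) := by rw [← hdecomp]
        _ ≤ q ((S1 - y₁) + (S2 - y₂)) + q ((S1 + S2) - y) := map_sub_le_add q _ _
        _ ≤ q (S1 - y₁) + q (S2 - y₂) + q ((S1 + S2) - y) := by
            linarith [map_add_le_add q (S1 - y₁) (S2 - y₂)]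
        _ < 3 * ε := by linarith
    have h0 : q (y - (y₁ + y₂)) ≤ 0 := by
      by_contra hcon
      push_neg at hcon
      have := key (q (y - (y₁ + y₂)) / 3) (by linarith)
      linarith
    exact le_antisymm h0 (apply_nonneg q _)
  exact sub_eq_zero.mp (eq_zero_of_seminorms hq0)

theorem riemannIntegral_eq (hab : a ≤ b) (h : IsRiemannIntegral f a b y) :
    riemannIntegral f a b = y := by
  have hex : ∃ z, IsRiemannIntegral f a b z := ⟨y, h⟩
  rw [riemannIntegral, dif_pos hex]
  exact hex.choose_spec.unique hab h

theorem isRiemannIntegral_riemannIntegral (hab : a ≤ b) (hex : ∃ z, IsRiemannIntegral f a b z) :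
    IsRiemannIntegral f a b (riemannIntegral f a b) := by
  rw [riemannIntegral, dif_pos hex]
  exact hex.choose_spec

theorem riemannIntegral_congr (hab : a ≤ b) (hfg : ∀ s ∈ Set.Icc a b, f s = g s) :
    riemannIntegral f a b = riemannIntegral g a b := by
  by_cases hex : ∃ z, IsRiemannIntegral f a b z
  · have h1 := isRiemannIntegral_riemannIntegral hab hex
    exact (riemannIntegral_eq hab ((h1.congr_fun hab hfg))).symm
  · have hex2 : ¬ ∃ z, IsRiemannIntegral g a b z := by
      rintro ⟨z, hz⟩
      exact hex ⟨z, hz.congr_fun hab (fun s hs => (hfg s hs).symm)⟩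
    rw [riemannIntegral, dif_neg hex, riemannIntegral, dif_neg hex2]

end RI3


section Existence
variable {X : Type*}
variable [AddCommGroup X] [Module ℝ X] [UniformSpace X] [IsUniformAddGroup X] [ContinuousSMul ℝ X]
variable [LocallyConvexSpace ℝ X] [T2Space X]
variable {a b : ℝ} {f : ℝ → X}
set_option linter.unusedSectionVars false

theorem sum_range_mul' {M : Type*} [AddCommMonoid M] (g : ℕ → M) (n m : ℕ) :
    ∑ k ∈ Finset.range (n * m), g k = ∑ i ∈ Finset.range n, ∑ j ∈ Finset.range m, g (i * m + j) := by
  induction n with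
  | zero => simp
  | succ n ih =>
    rw [Finset.sum_range_succ, ← ih, Nat.succ_mul, Finset.sum_range_add]

open scoped Uniformity in
/-- Uniform continuity with respect to a continuous seminorm on a compact interval. -/
theorem uc_on (hf : ContinuousOn f (Set.Icc a b)) (q : Seminorm ℝ X) (hq : Continuous ⇑q)
    {ε : ℝ} (hε : 0 < ε) :
    ∃ δ : ℝ, 0 < δ ∧ ∀ s ∈ Set.Icc a b, ∀ u ∈ Set.Icc a b, |s - u| < δ → q (f s - f u) < ε := by
  have hucon : UniformContinuousOn f (Set.Icc a b) :=
    isCompact_Icc.uniformContinuousOn_of_continuous hf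
  have hV : {p : X × X | q (p.2 - p.1) < ε} ∈ 𝓤 X := by
    rw [uniformity_eq_comap_nhds_zero X]
    refine Filter.mem_comap.mpr ⟨{x | q x < ε}, ?_, fun p hp => hp⟩
    exact (isOpen_lt hq continuous_const).mem_nhds (by simp [hε])
  have hmem := hucon hV
  rw [Filter.mem_map, Filter.mem_inf_principal] at hmem
  rcases Metric.mem_uniformity_dist.mp hmem with ⟨δ, hδ, Hδ⟩
  refine ⟨δ, hδ, fun s hs u hu hsu => ?_⟩
  have h1 : ((s, u) : ℝ × ℝ) ∈ {x : ℝ × ℝ | x ∈ Set.Icc a b ×ˢ Set.Icc a b →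
      x ∈ (fun x : ℝ × ℝ => (f x.1, f x.2)) ⁻¹' {p : X × X | q (p.2 - p.1) < ε}} := by
    apply Hδ
    rw [Real.dist_eq]
    exact hsu
  have h3 : q (f u - f s) < ε := h1 ⟨hs, hu⟩
  have h4 : f s - f u = -(f u - f s) := by abel
  rw [h4, map_neg_eq_map]
  exact h3

theorem bound_on (hf : ContinuousOn f (Set.Icc a b)) (q : Seminorm ℝ X) (hq : Continuous ⇑q) :
    ∃ M : ℝ, 0 ≤ M ∧ ∀ s ∈ Set.Icc a b, q (f s) ≤ M := by
  have hc : ContinuousOn (fun s => q (f s)) (Set.Icc a b) := hq.comp_continuousOn hf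
  rcases isCompact_Icc.exists_bound_of_continuousOn hc with ⟨C, hC⟩
  refine ⟨max C 0, le_max_right _ _, fun s hs => ?_⟩
  have h1 := hC s hs
  rw [Real.norm_eq_abs] at h1
  exact le_trans (le_abs_self _) (le_trans h1 (le_max_left _ _))

/-- The `k`-th uniform left Riemann sum. -/
noncomputable def unifSum (f : ℝ → X) (a b : ℝ) (k : ℕ) : X :=
  ∑ i ∈ Finset.range k, ((b - a) / k) • f (a + i * ((b - a) / k))

theorem unifSum_refine_bound (hab : a < b) (q : Seminorm ℝ X) {ε δ : ℝ} (hε : 0 < ε)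
    (huc : ∀ s ∈ Set.Icc a b, ∀ u ∈ Set.Icc a b, |s - u| < δ → q (f s - f u) < ε)
    {n m : ℕ} (hn : 0 < n) (hm : 0 < m) (hδn : (b - a) / n < δ) :
    q (unifSum f a b n - unifSum f a b (n * m)) ≤ (b - a) * ε := by
  have hba : (0:ℝ) < b - a := by linarith
  have hnR : (0:ℝ) < (n:ℝ) := by exact_mod_cast hn
  have hmR : (0:ℝ) < (m:ℝ) := by exact_mod_cast hm
  have h'pos : 0 < (b - a) / ((n:ℝ) * m) := by positivity
  have hpos : 0 < (b - a) / (n:ℝ) := by positivity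
  set h' : ℝ := (b - a) / ((n:ℝ) * m) with hh'
  set h : ℝ := (b - a) / (n:ℝ) with hh
  have hnm : ((n * m : ℕ) : ℝ) = (n:ℝ) * m := by push_cast; ring
  have hmul : h = m * h' := by rw [hh, hh']; field_simp
  have hnh : (n:ℝ) * h = b - a := by rw [hh]; field_simp
  have e2 : unifSum f a b (n * m)
      = ∑ i ∈ Finset.range n, ∑ j ∈ Finset.range m, h' • f (a + ((i:ℝ) * m + j) * h') := by
    rw [unifSum, sum_range_mul']
    refine Finset.sum_congr rfl fun i _ => Finset.sum_congr rfl fun j _ => ?_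
    rw [hnm]
    have hcast : ((i * m + j : ℕ) : ℝ) = (i:ℝ) * m + j := by push_cast; ring
    rw [hcast]
  have e1 : unifSum f a b n
      = ∑ i ∈ Finset.range n, ∑ j ∈ Finset.range m, h' • f (a + i * h) := by
    rw [unifSum]
    refine Finset.sum_congr rfl fun i _ => ?_
    rw [Finset.sum_const, Finset.card_range, ← hh]
    rw [← Nat.cast_smul_eq_nsmul ℝ, smul_smul, ← hmul]
  rw [e1, e2, ← Finset.sum_sub_distrib]
  have hle1 : ∀ i ∈ Finset.range n,
      q ((∑ j ∈ Finset.range m, h' • f (a + i * h))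
          - ∑ j ∈ Finset.range m, h' • f (a + ((i:ℝ) * m + j) * h'))
        ≤ (m:ℝ) * (h' * ε) := by
    intro i hi
    rw [Finset.mem_range] at hi
    rw [← Finset.sum_sub_distrib]
    refine le_trans (seminorm_sum_le q _ _) ?_
    have hterm : ∀ j ∈ Finset.range m,
        q (h' • f (a + i * h) - h' • f (a + ((i:ℝ) * m + j) * h')) ≤ h' * ε := by
      intro j hj
      rw [Finset.mem_range] at hj
      rw [← smul_sub, map_smul_eq_mul, Real.norm_eq_abs, abs_of_pos h'pos]
      refine mul_le_mul_of_nonneg_left ?_ (le_of_lt h'pos)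
      have hiR : (i:ℝ) ≤ (n:ℝ) - 1 := by
        have : (i:ℝ) + 1 ≤ (n:ℝ) := by exact_mod_cast Nat.succ_le_of_lt hi
        linarith
      have hjR : (j:ℝ) ≤ (m:ℝ) - 1 := by
        have : (j:ℝ) + 1 ≤ (m:ℝ) := by exact_mod_cast Nat.succ_le_of_lt hj
        linarith
      have harg : ((i:ℝ) * m + j) * h' = i * h + j * h' := by
        rw [hmul]; ring
      have hih1 : 0 ≤ (i:ℝ) * h := mul_nonneg (Nat.cast_nonneg i) hpos.le
      have hih2 : (i:ℝ) * h ≤ ((n:ℝ) - 1) * h := mul_le_mul_of_nonneg_right hiR hpos.le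
      have hjh1 : 0 ≤ (j:ℝ) * h' := mul_nonneg (Nat.cast_nonneg j) h'pos.le
      have hjh2 : (j:ℝ) * h' ≤ ((m:ℝ) - 1) * h' := mul_le_mul_of_nonneg_right hjR h'pos.le
      have hmh : (m:ℝ) * h' = h := by rw [hmul]
      have hnm1 : ((n:ℝ) - 1) * h = (b - a) - h := by
        rw [← hnh]; ring
      have hmm1 : ((m:ℝ) - 1) * h' = h - h' := by
        rw [← hmh]; ring
      have hmem1 : a + (i:ℝ) * h ∈ Set.Icc a b := by
        constructor
        · linarith
        · linarith
      have hmem2 : a + ((i:ℝ) * m + j) * h' ∈ Set.Icc a b := by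
        rw [harg]
        constructor
        · linarith
        · linarith
      refine le_of_lt (huc _ hmem1 _ hmem2 ?_)
      rw [harg]
      have habs : a + (i:ℝ) * h - (a + ((i:ℝ) * h + j * h')) = -((j:ℝ) * h') := by ring
      rw [habs, abs_neg, abs_of_nonneg hjh1]
      calc (j:ℝ) * h' ≤ ((m:ℝ) - 1) * h' := hjh2
        _ = h - h' := hmm1
        _ < h := by linarith
        _ < δ := hδn
    refine le_trans (Finset.sum_le_sum hterm) ?_
    rw [Finset.sum_const, Finset.card_range, nsmul_eq_mul]
  refine le_trans (seminorm_sum_le q _ _) ?_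
  refine le_trans (Finset.sum_le_sum hle1) ?_
  rw [Finset.sum_const, Finset.card_range, nsmul_eq_mul]
  have e3 : (n:ℝ) * ((m:ℝ) * (h' * ε)) = ((n:ℝ) * m * h') * ε := by ring
  have e4 : (n:ℝ) * m * h' = b - a := by rw [hh']; field_simp
  rw [e3, e4]


theorem sum_vs_unifSum (hab' : a < b) (q : Seminorm ℝ X) {ε₁ δ : ℝ} (hε₁ : 0 < ε₁) (hδ : 0 < δ)
    (huc : ∀ s ∈ Set.Icc a b, ∀ u ∈ Set.Icc a b, |s - u| < δ → q (f s - f u) < ε₁)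
    {M : ℝ} (hM0 : 0 ≤ M) (hM : ∀ s ∈ Set.Icc a b, q (f s) ≤ M)
    (d : IntervalPartition a b) (cc : ℕ → ℝ)
    (hfine : ∀ i, i < d.n → d.points (i + 1) - d.points i < δ)
    (htag : ∀ i, i < d.n → cc i ∈ Set.Icc (d.points i) (d.points (i + 1)))
    {k : ℕ} (hk : 0 < k) :
    q ((∑ i ∈ Finset.range d.n, (d.points (i + 1) - d.points i) • f (cc i)) - unifSum f a b k)
      ≤ (b - a) * ε₁ + (d.n) * ((b - a) / k) * M := by
  classical
  have hba : (0:ℝ) < b - a := by linarith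
  have hkR : (0:ℝ) < (k:ℝ) := by exact_mod_cast hk
  set h : ℝ := (b - a) / k with hh
  have hpos : 0 < h := by rw [hh]; positivity
  have hkh : (k:ℝ) * h = b - a := by rw [hh]; field_simp
  set t : ℕ → ℝ := fun j => a + j * h with ht
  have hn : 0 < d.n := by
    by_contra hcon
    have h0 : d.n = 0 := by omega
    have h1 := d.first_eq
    have h2 := d.last_eq
    rw [h0, h1] at h2
    linarith
  set I : ℕ → ℕ := fun j => Nat.findGreatest (fun i => d.points i ≤ t j) (d.n - 1) with hI
  have htj_lb : ∀ j : ℕ, a ≤ t j := by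
    intro j
    have : 0 ≤ (j:ℝ) * h := mul_nonneg (Nat.cast_nonneg j) hpos.le
    simp only [ht]
    linarith
  have htj_ub : ∀ j : ℕ, j < k → t j < b := by
    intro j hj
    have hjR : (j:ℝ) ≤ (k:ℝ) - 1 := by
      have : (j:ℝ) + 1 ≤ (k:ℝ) := by exact_mod_cast Nat.succ_le_of_lt hj
      linarith
    have : (j:ℝ) * h ≤ ((k:ℝ) - 1) * h := mul_le_mul_of_nonneg_right hjR hpos.le
    have hlt : ((k:ℝ) - 1) * h = (b - a) - h := by rw [← hkh]; ring
    simp only [ht]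
    linarith
  have hIj : ∀ j, I j = Nat.findGreatest (fun i => d.points i ≤ t j) (d.n - 1) :=
    fun j => by rw [hI]
  have hI_le : ∀ j, I j ≤ d.n - 1 := fun j => by rw [hIj j]; exact Nat.findGreatest_le _
  have hI_lt : ∀ j, I j < d.n := fun j => by have := hI_le j; omega
  have hI_spec : ∀ j, d.points (I j) ≤ t j := by
    intro j
    rw [hIj j]
    exact Nat.findGreatest_spec (P := fun i => d.points i ≤ t j) (Nat.zero_le _)
      (by show d.points 0 ≤ t j; rw [d.first_eq]; exact htj_lb j)
  have hI_ub : ∀ j, j < k → t j < d.points (I j + 1) := by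
    intro j hj
    by_cases hcase : I j = d.n - 1
    · have he : I j + 1 = d.n := by omega
      rw [he, d.last_eq]
      exact htj_ub j hj
    · have hlt : I j + 1 ≤ d.n - 1 := by have := hI_le j; omega
      have key := Nat.findGreatest_is_greatest (P := fun i => d.points i ≤ t j) (n := d.n - 1)
        (k := I j + 1) (by rw [← hIj j]; exact Nat.lt_succ_self _) hlt
      exact lt_of_not_ge key
  -- characterization of fibers
  have hchar : ∀ j, j < k → ∀ i, i < d.n →
      (I j = i ↔ (d.points i ≤ t j ∧ t j < d.points (i + 1))) := by
    intro j hj i hi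
    constructor
    · rintro rfl
      exact ⟨hI_spec j, hI_ub j hj⟩
    · rintro ⟨hle, hlt⟩
      have h1 : i ≤ I j := Nat.le_findGreatest (by omega) hle
      have h2 : I j ≤ i := by
        by_contra hcon
        push_neg at hcon
        have : d.points (i + 1) ≤ d.points (I j) := d.mono (by omega) (by have := hI_le j; omega)
        have := hI_spec j
        linarith
      omega
  -- the intermediate sum
  set S2 : X := ∑ j ∈ Finset.range k, h • f (cc (I j)) with hS2
  have bound1 : q (S2 - unifSum f a b k) ≤ (b - a) * ε₁ := by
    have e0 : unifSum f a b k = ∑ j ∈ Finset.range k, h • f (t j) := rfl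
    rw [e0, hS2, ← Finset.sum_sub_distrib]
    refine le_trans (seminorm_sum_le q _ _) ?_
    have hterm : ∀ j ∈ Finset.range k, q (h • f (cc (I j)) - h • f (t j)) ≤ h * ε₁ := by
      intro j hj
      rw [Finset.mem_range] at hj
      rw [← smul_sub, map_smul_eq_mul, Real.norm_eq_abs, abs_of_pos hpos]
      refine mul_le_mul_of_nonneg_left ?_ hpos.le
      have hIm := htag (I j) (hI_lt j)
      have hp1 := (d.points_mem (le_of_lt (hI_lt j))).1
      have hp2 := (d.points_mem (Nat.succ_le_of_lt (hI_lt j))).2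
      have hccm : cc (I j) ∈ Set.Icc a b := ⟨le_trans hp1 hIm.1, le_trans hIm.2 hp2⟩
      have htm : t j ∈ Set.Icc a b := ⟨htj_lb j, le_of_lt (htj_ub j hj)⟩
      refine le_of_lt (huc _ hccm _ htm ?_)
      have h1 := hI_spec j
      have h2 := hI_ub j hj
      have h3 := hfine (I j) (hI_lt j)
      rw [abs_lt]
      constructor <;> [skip; skip] <;>
        · have := hIm.1; have := hIm.2; linarith
    refine le_trans (Finset.sum_le_sum hterm) ?_
    rw [Finset.sum_const, Finset.card_range, nsmul_eq_mul, ← mul_assoc, hkh]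
  have bound2 : q ((∑ i ∈ Finset.range d.n, (d.points (i + 1) - d.points i) • f (cc i)) - S2)
      ≤ (d.n) * h * M := by
    have hmaps : ∀ j ∈ Finset.range k, I j ∈ Finset.range d.n := by
      intro j _
      rw [Finset.mem_range]
      exact hI_lt j
    have hfib := Finset.sum_fiberwise_of_maps_to hmaps (fun j => h • f (cc (I j)))
    have e1 : S2 = ∑ i ∈ Finset.range d.n,
        (((Finset.range k).filter (fun j => I j = i)).card * h) • f (cc i) := by
      rw [hS2, ← hfib]
      refine Finset.sum_congr rfl fun i hi => ?_
      have einner : ∑ j ∈ (Finset.range k).filter (fun j => I j = i), h • f (cc (I j))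
          = ∑ j ∈ (Finset.range k).filter (fun j => I j = i), h • f (cc i) := by
        refine Finset.sum_congr rfl fun j hj => ?_
        rw [Finset.mem_filter] at hj
        rw [hj.2]
      rw [einner, Finset.sum_const, ← Nat.cast_smul_eq_nsmul ℝ, smul_smul]
    have e2 : (∑ i ∈ Finset.range d.n, (d.points (i + 1) - d.points i) • f (cc i)) - S2
        = ∑ i ∈ Finset.range d.n,
            ((d.points (i + 1) - d.points i) - ((Finset.range k).filter (fun j => I j = i)).card * h) • f (cc i) := by
      rw [e1, ← Finset.sum_sub_distrib]
      refine Finset.sum_congr rfl fun i hi => ?_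
      simp only [sub_smul]
    rw [e2]
    refine le_trans (seminorm_sum_le q _ _) ?_
    have hterm : ∀ i ∈ Finset.range d.n,
        q (((d.points (i + 1) - d.points i) - ((Finset.range k).filter (fun j => I j = i)).card * h) • f (cc i))
          ≤ h * M := by
      intro i hi
      rw [Finset.mem_range] at hi
      -- compute the fiber
      set x : ℝ := (d.points i - a) / h with hx
      set y : ℝ := (d.points (i+1) - a) / h with hy
      have hx0 : 0 ≤ x := by
        rw [hx]
        have h2 := (d.points_mem (le_of_lt hi)).1
        exact div_nonneg (by linarith) hpos.le
      have hxy : x ≤ y := by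
        rw [hx, hy]
        have h2 := d.increasing i hi
        exact (div_le_div_iff_of_pos_right hpos).mpr (by linarith)
      have hy0 : 0 ≤ y := le_trans hx0 hxy
      have hyk : y ≤ k := by
        rw [hy, div_le_iff₀ hpos]
        have h2 := (d.points_mem (Nat.succ_le_of_lt hi)).2
        linarith [hkh]
      have hfibeq : (Finset.range k).filter (fun j => I j = i) = Finset.Ico ⌈x⌉₊ ⌈y⌉₊ := by
        ext j
        rw [Finset.mem_filter, Finset.mem_range, Finset.mem_Ico]
        constructor
        · rintro ⟨hjk, hji⟩
          rw [hchar j hjk i hi] at hji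
          constructor
          · rw [Nat.ceil_le, hx, div_le_iff₀ hpos]
            have := hji.1
            simp only [ht] at this
            linarith
          · rw [Nat.lt_ceil, hy, lt_div_iff₀ hpos]
            have := hji.2
            simp only [ht] at this
            linarith
        · rintro ⟨hj1, hj2⟩
          have hjy : (j:ℝ) < y := Nat.lt_ceil.mp hj2
          have hjx : x ≤ (j:ℝ) := by
            have := Nat.ceil_le.mp (le_refl ⌈x⌉₊)
            calc x ≤ (⌈x⌉₊ : ℝ) := Nat.le_ceil x
              _ ≤ (j:ℝ) := by exact_mod_cast hj1
          have hjk : j < k := by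
            have : (j:ℝ) < (k:ℝ) := lt_of_lt_of_le hjy hyk
            exact_mod_cast this
          refine ⟨hjk, ?_⟩
          rw [hchar j hjk i hi]
          constructor
          · have : x * h ≤ j * h := mul_le_mul_of_nonneg_right hjx hpos.le
            rw [hx, div_mul_cancel₀ _ hpos.ne'] at this
            simp only [ht]
            linarith
          · have : (j:ℝ) * h < y * h := mul_lt_mul_of_pos_right hjy hpos
            rw [hy, div_mul_cancel₀ _ hpos.ne'] at this
            simp only [ht]
            linarith
      rw [hfibeq, Nat.card_Ico]
      -- now the numeric bound
      have hcc : ⌈x⌉₊ ≤ ⌈y⌉₊ := Nat.ceil_le_ceil hxy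
      have hcast : ((⌈y⌉₊ - ⌈x⌉₊ : ℕ) : ℝ) = (⌈y⌉₊ : ℝ) - (⌈x⌉₊ : ℝ) := by
        rw [Nat.cast_sub hcc]
      have hxc1 : x ≤ (⌈x⌉₊:ℝ) := Nat.le_ceil x
      have hxc2 : (⌈x⌉₊:ℝ) < x + 1 := Nat.ceil_lt_add_one hx0
      have hyc1 : y ≤ (⌈y⌉₊:ℝ) := Nat.le_ceil y
      have hyc2 : (⌈y⌉₊:ℝ) < y + 1 := Nat.ceil_lt_add_one hy0
      have hdelta : d.points (i+1) - d.points i = (y - x) * h := by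
        rw [hx, hy]
        field_simp
        ring
      have habs : |(d.points (i + 1) - d.points i) - ((⌈y⌉₊ - ⌈x⌉₊ : ℕ):ℝ) * h| ≤ h := by
        rw [hdelta, hcast]
        have : (y - x) * h - ((⌈y⌉₊:ℝ) - (⌈x⌉₊:ℝ)) * h = ((y - (⌈y⌉₊:ℝ)) - (x - (⌈x⌉₊:ℝ))) * h := by
          ring
        rw [this, abs_mul, abs_of_pos hpos]
        have h1 : |(y - (⌈y⌉₊:ℝ)) - (x - (⌈x⌉₊:ℝ))| ≤ 1 := by
          rw [abs_le]
          constructor <;> linarith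
        calc |(y - (⌈y⌉₊:ℝ)) - (x - (⌈x⌉₊:ℝ))| * h ≤ 1 * h :=
              mul_le_mul_of_nonneg_right h1 hpos.le
          _ = h := one_mul h
      have hccm : cc i ∈ Set.Icc a b := by
        have hp1 := (d.points_mem (le_of_lt hi)).1
        have hp2 := (d.points_mem (Nat.succ_le_of_lt hi)).2
        have h3 := htag i hi
        exact ⟨le_trans hp1 h3.1, le_trans h3.2 hp2⟩
      rw [map_smul_eq_mul, Real.norm_eq_abs]
      exact mul_le_mul habs (hM _ hccm) (apply_nonneg q _) hpos.le
    refine le_trans (Finset.sum_le_sum hterm) ?_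
    rw [Finset.sum_const, Finset.card_range, nsmul_eq_mul]
    exact le_of_eq (by ring)
  calc q ((∑ i ∈ Finset.range d.n, (d.points (i + 1) - d.points i) • f (cc i)) - unifSum f a b k)
      ≤ q ((∑ i ∈ Finset.range d.n, (d.points (i + 1) - d.points i) • f (cc i)) - S2)
        + q (S2 - unifSum f a b k) := by
          have e : (∑ i ∈ Finset.range d.n, (d.points (i + 1) - d.points i) • f (cc i)) - unifSum f a b k
              = ((∑ i ∈ Finset.range d.n, (d.points (i + 1) - d.points i) • f (cc i)) - S2)
                + (S2 - unifSum f a b k) := by abel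
          rw [e]
          exact map_add_le_add q _ _
    _ ≤ (d.n) * h * M + (b - a) * ε₁ := add_le_add bound2 bound1
    _ = (b - a) * ε₁ + (d.n) * h * M := by ring


theorem exists_isRiemannIntegral (hX : SequentiallyComplete X) (hab : a ≤ b)
    (hf : ContinuousOn f (Set.Icc a b)) : ∃ y, IsRiemannIntegral f a b y := by
  classical
  rcases eq_or_lt_of_le hab with rfl | hab'
  · exact ⟨0, isRiemannIntegral_degenerate f a⟩
  have hba : (0:ℝ) < b - a := by linarith
  -- Cauchy sequence of uniform Riemann sums
  have hcauchy : CauchySeq (fun p : ℕ => unifSum f a b (p + 1)) := by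
    apply cauchySeq_of_seminorms
    intro q hq ε hε
    have hc0 : (0:ℝ) < 2 * (b - a) + 2 := by linarith
    have hε' : 0 < ε / (2 * (b - a) + 2) := by positivity
    rcases uc_on hf q hq hε' with ⟨δ, hδ, huc⟩
    obtain ⟨N, hN⟩ : ∃ N : ℕ, (b - a) / δ < N := exists_nat_gt _
    have hkey : ∀ p : ℕ, N ≤ p → (b - a) / ((p:ℝ) + 1) < δ := by
      intro p hp
      have hp1 : (0:ℝ) < (p:ℝ) + 1 := by positivity
      have h2 : (b - a) / δ < (p:ℝ) + 1 := by
        have : (N:ℝ) ≤ (p:ℝ) := by exact_mod_cast hp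
        linarith
      rw [div_lt_iff₀ hp1]
      rw [div_lt_iff₀ hδ] at h2
      linarith
    refine ⟨N, fun m hm p hp => ?_⟩
    have hm1 : 0 < m + 1 := Nat.succ_pos m
    have hp1 : 0 < p + 1 := Nat.succ_pos p
    have hcastm : ((m + 1 : ℕ) : ℝ) = (m:ℝ) + 1 := by push_cast; ring
    have hcastp : ((p + 1 : ℕ) : ℝ) = (p:ℝ) + 1 := by push_cast; ring
    have b1 : q (unifSum f a b (m + 1) - unifSum f a b ((m + 1) * (p + 1)))
        ≤ (b - a) * (ε / (2 * (b - a) + 2)) := by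
      refine unifSum_refine_bound hab' q hε' huc hm1 hp1 ?_
      rw [hcastm]; exact hkey m hm
    have b2 : q (unifSum f a b (p + 1) - unifSum f a b ((p + 1) * (m + 1)))
        ≤ (b - a) * (ε / (2 * (b - a) + 2)) := by
      refine unifSum_refine_bound hab' q hε' huc hp1 hm1 ?_
      rw [hcastp]; exact hkey p hp
    rw [Nat.mul_comm] at b2
    have htri : q (unifSum f a b (m + 1) - unifSum f a b (p + 1))
        ≤ q (unifSum f a b (m + 1) - unifSum f a b ((m + 1) * (p + 1)))
          + q (unifSum f a b (p + 1) - unifSum f a b ((m + 1) * (p + 1))) := by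
      have e : unifSum f a b (m + 1) - unifSum f a b (p + 1)
          = (unifSum f a b (m + 1) - unifSum f a b ((m + 1) * (p + 1)))
            - (unifSum f a b (p + 1) - unifSum f a b ((m + 1) * (p + 1))) := by abel
      rw [e]
      exact map_sub_le_add q _ _
    have hfin : 2 * ((b - a) * (ε / (2 * (b - a) + 2))) < ε := by
      have he : 2 * ((b - a) * (ε / (2 * (b - a) + 2))) = (2 * (b - a)) / (2 * (b - a) + 2) * ε := by
        field_simp
      rw [he]
      have hlt : (2 * (b - a)) / (2 * (b - a) + 2) < 1 := by
        rw [div_lt_one hc0]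
        linarith
      calc (2 * (b - a)) / (2 * (b - a) + 2) * ε < 1 * ε := mul_lt_mul_of_pos_right hlt hε
        _ = ε := one_mul ε
    calc q (unifSum f a b (m + 1) - unifSum f a b (p + 1))
        ≤ _ + _ := htri
      _ ≤ (b - a) * (ε / (2 * (b - a) + 2)) + (b - a) * (ε / (2 * (b - a) + 2)) :=
          add_le_add b1 b2
      _ = 2 * ((b - a) * (ε / (2 * (b - a) + 2))) := by ring
      _ < ε := hfin
  obtain ⟨z, hz⟩ := hX _ hcauchy
  refine ⟨z, ?_⟩
  intro q hq ε hε
  have hc0 : (0:ℝ) < 2 * (b - a) + 2 := by linarith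
  have hε₁ : 0 < ε / (2 * (b - a) + 2) := by positivity
  rcases uc_on hf q hq hε₁ with ⟨δ, hδ, huc⟩
  rcases bound_on hf q hq with ⟨M, hM0, hM⟩
  refine ⟨δ, hδ, fun d cc hfine htag => ?_⟩
  set RS := ∑ i ∈ Finset.range d.n, (d.points (i + 1) - d.points i) • f (cc i) with hRS
  -- estimate against each uniform sum
  have hbound : ∀ p : ℕ, q (RS - unifSum f a b (p + 1))
      ≤ (b - a) * (ε / (2 * (b - a) + 2)) + (d.n) * ((b - a) / ((p:ℝ) + 1)) * M := by
    intro p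
    have hcast : ((p + 1 : ℕ) : ℝ) = (p:ℝ) + 1 := by push_cast; ring
    have := sum_vs_unifSum hab' q hε₁ hδ huc hM0 hM d cc hfine htag (Nat.succ_pos p)
    rw [hcast] at this
    exact this
  -- take the limit
  have hlim1 : Filter.Tendsto (fun p : ℕ => q (RS - unifSum f a b (p + 1)))
      Filter.atTop (𝓝 (q (RS - z))) := by
    have h1 : Filter.Tendsto (fun p : ℕ => RS - unifSum f a b (p + 1))
        Filter.atTop (𝓝 (RS - z)) := tendsto_const_nhds.sub hz
    exact (hq.tendsto _).comp h1
  have hlim2 : Filter.Tendsto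
      (fun p : ℕ => (b - a) * (ε / (2 * (b - a) + 2)) + (d.n) * ((b - a) / ((p:ℝ) + 1)) * M)
      Filter.atTop (𝓝 ((b - a) * (ε / (2 * (b - a) + 2)) + 0)) := by
    refine Filter.Tendsto.add tendsto_const_nhds ?_
    have h1 : Filter.Tendsto (fun p : ℕ => (b - a) / ((p:ℝ) + 1)) Filter.atTop (𝓝 0) := by
      apply Filter.Tendsto.div_atTop (tendsto_const_nhds (x := b - a))
      exact Filter.tendsto_atTop_add_const_right _ 1 tendsto_natCast_atTop_atTop
    have h2 : Filter.Tendsto (fun p : ℕ => (d.n : ℝ) * ((b - a) / ((p:ℝ) + 1)) * M)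
        Filter.atTop (𝓝 ((d.n : ℝ) * 0 * M)) := by
      exact (Filter.Tendsto.const_mul _ h1).mul_const M
    simpa using h2
  have hle : q (RS - z) ≤ (b - a) * (ε / (2 * (b - a) + 2)) + 0 :=
    le_of_tendsto_of_tendsto' hlim1 hlim2 hbound
  have hfin : (b - a) * (ε / (2 * (b - a) + 2)) < ε := by
    have he : (b - a) * (ε / (2 * (b - a) + 2)) = (b - a) / (2 * (b - a) + 2) * ε := by
      field_simp
    rw [he]
    have hlt : (b - a) / (2 * (b - a) + 2) < 1 := by
      rw [div_lt_one hc0]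
      linarith
    calc (b - a) / (2 * (b - a) + 2) * ε < 1 * ε := mul_lt_mul_of_pos_right hlt hε
      _ = ε := one_mul ε
  rw [add_zero] at hle
  exact lt_of_le_of_lt hle hfin

end Existence


section SG
variable {X U : Type*}
variable [AddCommGroup X] [Module ℝ X] [UniformSpace X] [IsUniformAddGroup X] [ContinuousSMul ℝ X]
variable [AddCommGroup U] [Module ℝ U] [UniformSpace U] [IsUniformAddGroup U] [ContinuousSMul ℝ U]


variable {T : ℝ → X →L[ℝ] X}
set_option linter.unusedSectionVars false

theorem genDomain_sub {x y : X} (hx : x ∈ genDomain T) (hy : y ∈ genDomain T) :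
    x - y ∈ genDomain T := by
  obtain ⟨x', hx'⟩ := hx
  obtain ⟨y', hy'⟩ := hy
  refine ⟨x' - y', ?_⟩
  have heq : (fun t : ℝ => t⁻¹ • (T t (x - y) - (x - y)))
      = fun t : ℝ => t⁻¹ • (T t x - x) - t⁻¹ • (T t y - y) := by
    funext t
    rw [map_sub, ← smul_sub]
    congr 1
    abel
  rw [heq]
  exact hx'.sub hy'

theorem genDomain_add {x y : X} (hx : x ∈ genDomain T) (hy : y ∈ genDomain T) :
    x + y ∈ genDomain T := by
  obtain ⟨x', hx'⟩ := hx
  obtain ⟨y', hy'⟩ := hy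
  refine ⟨x' + y', ?_⟩
  have heq : (fun t : ℝ => t⁻¹ • (T t (x + y) - (x + y)))
      = fun t : ℝ => t⁻¹ • (T t x - x) + t⁻¹ • (T t y - y) := by
    funext t
    rw [map_add, ← smul_add]
    congr 1
    abel
  rw [heq]
  exact hx'.add hy'

theorem genDomain_mapT (hT : IsSCLESemigroup T) {t : ℝ} (ht : 0 ≤ t) {x : X}
    (hx : x ∈ genDomain T) : T t x ∈ genDomain T := by
  obtain ⟨y, hy⟩ := hx
  refine ⟨T t y, ?_⟩
  have h1 : Filter.Tendsto (fun h : ℝ => T t (h⁻¹ • (T h x - x))) (𝓝[>] (0:ℝ)) (𝓝 (T t y)) :=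
    ((T t).continuous.tendsto y).comp hy
  refine h1.congr' ?_
  filter_upwards [self_mem_nhdsWithin] with h hh
  rw [Set.mem_Ioi] at hh
  have hcomm : T h (T t x) = T t (T h x) := by
    have e1 := hT.2.1 h t (le_of_lt hh) ht
    have e2 := hT.2.1 t h ht (le_of_lt hh)
    rw [add_comm] at e1
    rw [e1] at e2
    calc T h (T t x) = ((T h).comp (T t)) x := rfl
      _ = ((T t).comp (T h)) x := by rw [← e2]
      _ = T t (T h x) := rfl
  rw [map_smul, map_sub, hcomm]

end SG

section SG2
variable {X U : Type*}
variable [AddCommGroup X] [Module ℝ X] [UniformSpace X] [IsUniformAddGroup X] [ContinuousSMul ℝ X]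
variable [LocallyConvexSpace ℝ X] [T2Space X]
variable [AddCommGroup U] [Module ℝ U] [UniformSpace U] [IsUniformAddGroup U] [ContinuousSMul ℝ U]
variable {T : ℝ → X →L[ℝ] X}
set_option linter.unusedSectionVars false

theorem contOn_T_apply (hT : IsSCLESemigroup T) (x : X) {c e : ℝ} (hc : 0 ≤ c) :
    ContinuousOn (fun s => T s x) (Set.Icc c e) :=
  (hT.2.2.1 x).mono (fun s hs => le_trans hc hs.1)

/-- `∫_0^τ T(s)x ds ∈ D(A)`. -/
theorem integral_T_mem_genDomain (hX : SequentiallyComplete X) (hT : IsSCLESemigroup T)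
    (x : X) {τ : ℝ} (hτ : 0 ≤ τ) {y : X} (hy : IsRiemannIntegral (fun s => T s x) 0 τ y) :
    y ∈ genDomain T := by
  classical
  -- the two boundary integrals for h > 0
  have hex : ∀ c e : ℝ, 0 ≤ c → c ≤ e → ∃ w, IsRiemannIntegral (fun s => T s x) c e w :=
    fun c e hc hce => exists_isRiemannIntegral hX hce (contOn_T_apply hT x hc)
  -- key identity
  have hkey : ∀ h : ℝ, 0 < h → ∀ wh zh,
      IsRiemannIntegral (fun s => T s x) 0 h wh →
      IsRiemannIntegral (fun s => T s x) τ (τ + h) zh →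
      T h y - y = zh - wh := by
    intro h hh wh zh hwh hzh
    have h1 : IsRiemannIntegral (fun s => T h (T s x)) 0 τ (T h y) := hy.map (T h)
    have h2 : IsRiemannIntegral (fun s => T (s + h) x) 0 τ (T h y) := by
      refine h1.congr_fun hτ (fun s hs => ?_)
      have := hT.2.1 h s (le_of_lt hh) hs.1
      rw [add_comm]
      calc T h (T s x) = ((T h).comp (T s)) x := rfl
        _ = T (h + s) x := by rw [← this]
    have h3 := h2.translate (-h)
    rw [show (0:ℝ) - -h = h from by ring, show τ - -h = τ + h from by ring] at h3
    have h4 : IsRiemannIntegral (fun s => T s x) h (τ + h) (T h y) := by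
      refine h3.congr_fun (by linarith) (fun s hs => ?_)
      rw [show s + -h + h = s from by ring]
    obtain ⟨Y, hY⟩ := hex 0 (τ + h) le_rfl (by linarith)
    have e1 : Y = wh + T h y := IsRiemannIntegral.additivity (le_of_lt hh) (by linarith) hwh h4 hY
    have e2 : Y = y + zh := IsRiemannIntegral.additivity hτ (by linarith) hy hzh hY
    have : wh + T h y = y + zh := by rw [← e1, e2]
    calc T h y - y = (wh + T h y) - y - wh := by abel
      _ = (y + zh) - y - wh := by rw [this]
      _ = zh - wh := by abel
  refine ⟨T τ x - x, ?_⟩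
  apply tendsto_of_seminorms
  intro q hq ε hε
  have hε3 : 0 < ε / 3 := by linarith
  -- continuity at τ and at 0
  have hcτ : ∀ᶠ s in 𝓝[Set.Ici (0:ℝ)] τ, q (T s x - T τ x) < ε / 3 :=
    seminorms_tendsto ((hT.2.2.1 x) τ (Set.mem_Ici.mpr hτ)) q hq hε3
  have hc0 : ∀ᶠ s in 𝓝[Set.Ici (0:ℝ)] 0, q (T s x - T 0 x) < ε / 3 :=
    seminorms_tendsto ((hT.2.2.1 x) 0 (Set.mem_Ici.mpr le_rfl)) q hq hε3
  rw [eventually_nhdsWithin_iff] at hcτ hc0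
  rcases Metric.eventually_nhds_iff.mp hcτ with ⟨δ₁, hδ₁, H1⟩
  rcases Metric.eventually_nhds_iff.mp hc0 with ⟨δ₂, hδ₂, H2⟩
  have hT0x : T 0 x = x := by rw [hT.1]; rfl
  filter_upwards [Ioo_mem_nhdsGT_of_mem (Set.mem_Ico.mpr ⟨le_rfl, lt_min hδ₁ hδ₂⟩)] with h hh
  obtain ⟨hh0, hhδ⟩ := hh
  obtain ⟨wh, hwh⟩ := hex 0 h le_rfl (le_of_lt hh0)
  obtain ⟨zh, hzh⟩ := hex τ (τ + h) hτ (by linarith)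
  have hid := hkey h hh0 wh zh hwh hzh
  -- integral representations of the differences
  have hconst1 := isRiemannIntegral_const (T τ x) τ (τ + h)
  rw [show τ + h - τ = h from by ring] at hconst1
  have hsub1 := hzh.sub hconst1
  have hconst2 := isRiemannIntegral_const (x) 0 h
  rw [show h - 0 = h from by ring] at hconst2
  have hsub2 := hwh.sub hconst2
  -- bounds
  have hb1 : q (zh - h • T τ x) ≤ h * (ε / 3) := by
    have := hsub1.seminorm_bound (by linarith : τ ≤ τ + h) q hq (M := ε / 3) ?_
    · rw [show τ + h - τ = h from by ring] at this
      exact this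
    · intro s hs
      refine le_of_lt (H1 ?_ ?_)
      · rw [Real.dist_eq, abs_of_nonneg (by linarith [hs.1])]
        have := hs.2
        have hδm : h < δ₁ := lt_of_lt_of_le hhδ (min_le_left _ _)
        linarith
      · exact le_trans hτ hs.1
  have hb2 : q (wh - h • x) ≤ h * (ε / 3) := by
    have := hsub2.seminorm_bound (by linarith : (0:ℝ) ≤ h) q hq (M := ε / 3) ?_
    · rw [show h - 0 = h from by ring] at this
      exact this
    · intro s hs
      have hs2 : q (T s x - T 0 x) < ε / 3 := by
        refine H2 ?_ hs.1
        rw [Real.dist_eq, sub_zero, abs_of_nonneg hs.1]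
        have hδm : h < δ₂ := lt_of_lt_of_le hhδ (min_le_right _ _)
        linarith [hs.2]
      rw [hT0x] at hs2
      exact le_of_lt hs2
  -- final estimate
  show q (h⁻¹ • (T h y - y) - (T τ x - x)) < ε
  have hrw : h⁻¹ • (T h y - y) - (T τ x - x)
      = h⁻¹ • (zh - h • T τ x) - h⁻¹ • (wh - h • x) := by
    rw [hid]
    have e1 : h⁻¹ • (h • T τ x) = T τ x := by
      rw [smul_smul, inv_mul_cancel₀ (ne_of_gt hh0), one_smul]
    have e2 : h⁻¹ • (h • x) = x := by
      rw [smul_smul, inv_mul_cancel₀ (ne_of_gt hh0), one_smul]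
    rw [smul_sub, smul_sub, smul_sub, e1, e2]
    abel
  rw [hrw]
  have hq1 : q (h⁻¹ • (zh - h • T τ x)) ≤ ε / 3 := by
    rw [map_smul_eq_mul, Real.norm_eq_abs, abs_of_pos (by positivity)]
    calc h⁻¹ * q (zh - h • T τ x) ≤ h⁻¹ * (h * (ε / 3)) :=
          mul_le_mul_of_nonneg_left hb1 (by positivity)
      _ = ε / 3 := by field_simp
  have hq2 : q (h⁻¹ • (wh - h • x)) ≤ ε / 3 := by
    rw [map_smul_eq_mul, Real.norm_eq_abs, abs_of_pos (by positivity)]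
    calc h⁻¹ * q (wh - h • x) ≤ h⁻¹ * (h * (ε / 3)) :=
          mul_le_mul_of_nonneg_left hb2 (by positivity)
      _ = ε / 3 := by field_simp
  calc q (h⁻¹ • (zh - h • T τ x) - h⁻¹ • (wh - h • x))
      ≤ q (h⁻¹ • (zh - h • T τ x)) + q (h⁻¹ • (wh - h • x)) := map_sub_le_add q _ _
    _ ≤ ε / 3 + ε / 3 := add_le_add hq1 hq2
    _ < ε := by linarith

end SG2


section SG3
variable {X U : Type*}
variable [AddCommGroup X] [Module ℝ X] [UniformSpace X] [IsUniformAddGroup X] [ContinuousSMul ℝ X]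
variable [LocallyConvexSpace ℝ X] [T2Space X]
variable [AddCommGroup U] [Module ℝ U] [UniformSpace U] [IsUniformAddGroup U] [ContinuousSMul ℝ U]
variable {T : ℝ → X →L[ℝ] X}
set_option linter.unusedSectionVars false

theorem conv_integrand_continuous (hT : IsSCLESemigroup T) {t : ℝ} (ht : 0 ≤ t) {g : ℝ → X}
    (hg : ContinuousOn g (Set.Icc 0 t)) :
    ContinuousOn (fun s => T (t - s) (g s)) (Set.Icc (0:ℝ) t) := by
  intro s₀ hs₀
  unfold ContinuousWithinAt
  apply tendsto_of_seminorms
  intro q hq ε hε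
  obtain ⟨p, hpc, C, hC, hbound⟩ := hT.2.2.2 q hq t ht
  have hC1 : (0:ℝ) < C + 1 := by linarith
  have hε2 : 0 < ε / (2 * (C + 1)) := by positivity
  -- first part : p (g s - g s₀) small
  have hcg : Filter.Tendsto (fun s => g s) (𝓝[Set.Icc (0:ℝ) t] s₀) (𝓝 (g s₀)) := hg s₀ hs₀
  have h1 : ∀ᶠ s in 𝓝[Set.Icc (0:ℝ) t] s₀, p (g s - g s₀) < ε / (2 * (C + 1)) := by
    have := seminorms_tendsto (X := X) hcg p hpc hε2
    exact this
  -- second part : strong continuity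
  have hmap : Set.MapsTo (fun s => t - s) (Set.Icc (0:ℝ) t) (Set.Ici (0:ℝ)) := by
    intro s hs
    show (0:ℝ) ≤ t - s
    linarith [hs.2]
  have hts : Filter.Tendsto (fun s => t - s) (𝓝[Set.Icc (0:ℝ) t] s₀) (𝓝[Set.Ici (0:ℝ)] (t - s₀)) :=
    Filter.Tendsto.inf ((continuous_const.sub continuous_id).tendsto s₀)
      (Filter.tendsto_principal_principal.mpr fun s hs => hmap hs)
  have hstrong : Filter.Tendsto (fun s => T (t - s) (g s₀)) (𝓝[Set.Icc (0:ℝ) t] s₀)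
      (𝓝 (T (t - s₀) (g s₀))) := by
    have hcont := (hT.2.2.1 (g s₀)) (t - s₀) (Set.mem_Ici.mpr (by linarith [hs₀.2]))
    exact Filter.Tendsto.comp hcont hts
  have h2 : ∀ᶠ s in 𝓝[Set.Icc (0:ℝ) t] s₀,
      q (T (t - s) (g s₀) - T (t - s₀) (g s₀)) < ε / 2 :=
    seminorms_tendsto hstrong q hq (by linarith)
  filter_upwards [h1, h2, self_mem_nhdsWithin] with s hs1 hs2 hs3
  have hsplit : T (t - s) (g s) - T (t - s₀) (g s₀)
      = T (t - s) (g s - g s₀) + (T (t - s) (g s₀) - T (t - s₀) (g s₀)) := by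
    rw [map_sub]
    abel
  rw [hsplit]
  have hb1 : q (T (t - s) (g s - g s₀)) ≤ C * p (g s - g s₀) := by
    refine hbound (t - s) ?_ _
    exact ⟨by linarith [hs3.2], by linarith [hs3.1]⟩
  calc q (T (t - s) (g s - g s₀) + (T (t - s) (g s₀) - T (t - s₀) (g s₀)))
      ≤ q (T (t - s) (g s - g s₀)) + q (T (t - s) (g s₀) - T (t - s₀) (g s₀)) :=
        map_add_le_add q _ _
    _ ≤ C * p (g s - g s₀) + q (T (t - s) (g s₀) - T (t - s₀) (g s₀)) := by linarith
    _ < C * (ε / (2 * (C + 1))) + ε / 2 := by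
        have : C * p (g s - g s₀) ≤ C * (ε / (2 * (C + 1))) :=
          mul_le_mul_of_nonneg_left (le_of_lt hs1) hC
        have hlt : C * (ε / (2 * (C + 1))) ≤ C * (ε / (2 * (C + 1))) := le_rfl
        linarith
    _ ≤ ε / 2 + ε / 2 := by
        have hkey : C * (ε / (2 * (C + 1))) ≤ ε / 2 := by
          have h0 : C / (C + 1) ≤ 1 := by
            rw [div_le_one hC1]; linarith
          have e : C * (ε / (2 * (C + 1))) = (C / (C + 1)) * (ε / 2) := by
            field_simp
            try ring
            try exact Or.inl trivial
          rw [e]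
          calc (C / (C + 1)) * (ε / 2) ≤ 1 * (ε / 2) :=
              mul_le_mul_of_nonneg_right h0 (by linarith)
            _ = ε / 2 := one_mul _
        linarith
    _ = ε := by ring

end SG3

section SG4
variable {X U : Type*}
variable [AddCommGroup X] [Module ℝ X] [UniformSpace X] [IsUniformAddGroup X] [ContinuousSMul ℝ X]
variable [LocallyConvexSpace ℝ X] [T2Space X]
variable [AddCommGroup U] [Module ℝ U] [UniformSpace U] [IsUniformAddGroup U] [ContinuousSMul ℝ U]
variable {T : ℝ → X →L[ℝ] X} {B : U →L[ℝ] X}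
set_option linter.unusedSectionVars false

theorem part_a (hX : SequentiallyComplete X) (hT : IsSCLESemigroup T) {r : ℝ} (hr : 0 < r)
    (hyp : ∀ f : ℝ → U, ContinuousOn f (Set.Icc 0 r) →
      sgConv T (fun s => B (f s)) r ∈ genDomain T)
    {f : ℝ → U} (hf : ContinuousOn f (Set.Icc 0 r)) {t : ℝ} (ht : t ∈ Set.Icc (0:ℝ) r) :
    sgConv T (fun s => B (f s)) t ∈ genDomain T := by
  obtain ⟨ht0, htr⟩ := ht
  have he0 : (0:ℝ) ≤ r - t := by linarith
  have hBft : ContinuousOn (fun s => B (f s)) (Set.Icc 0 t) :=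
    (B.continuous.comp_continuousOn hf).mono (Set.Icc_subset_Icc le_rfl htr)
  obtain ⟨yt, hyt⟩ := exists_isRiemannIntegral hX ht0 (conv_integrand_continuous hT ht0 hBft)
  have hval : sgConv T (fun s => B (f s)) t = yt := riemannIntegral_eq ht0 hyt
  -- the auxiliary function g
  set g : ℝ → U := fun s => f (max 0 (s - (r - t))) with hgdef
  have hg : ContinuousOn g (Set.Icc 0 r) := by
    refine hf.comp ((continuous_const.max (continuous_id.sub continuous_const)).continuousOn) ?_
    intro s hs
    constructor
    · exact le_max_left _ _
    · exact max_le (le_of_lt hr) (by linarith [hs.2])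
  have hBg : ContinuousOn (fun s => B (g s)) (Set.Icc 0 r) := B.continuous.comp_continuousOn hg
  obtain ⟨Y, hY⟩ := exists_isRiemannIntegral hX (le_of_lt hr)
    (conv_integrand_continuous hT (le_of_lt hr) hBg)
  -- piece 1 : `∫_0^{r-t}`
  obtain ⟨Je, hJe⟩ := exists_isRiemannIntegral hX he0
    (contOn_T_apply hT (B (f 0)) (le_refl (0:ℝ)))
  have hJmem : Je ∈ genDomain T := integral_T_mem_genDomain hX hT _ he0 hJe
  have h1 : IsRiemannIntegral (fun s => T t (T (0 + (r - t) - s) (B (f 0)))) 0 (r - t) (T t Je) :=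
    hJe.reverse.map (T t)
  have h1' : IsRiemannIntegral (fun s => T (r - s) (B (g s))) 0 (r - t) (T t Je) := by
    refine h1.congr_fun he0 (fun s hs => ?_)
    have hg0 : g s = f 0 := by
      show f (max 0 (s - (r - t))) = f 0
      rw [max_eq_left (by linarith [hs.2])]
    have hcomp := hT.2.1 t (r - t - s) ht0 (by linarith [hs.2])
    rw [show t + (r - t - s) = r - s from by ring] at hcomp
    rw [hg0, show (0:ℝ) + (r - t) - s = r - t - s from by ring, hcomp]
    rfl
  -- piece 2 : `∫_{r-t}^r`
  have h2 := hyt.translate (-(r - t))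
  rw [show (0:ℝ) - -(r - t) = r - t from by ring, show t - -(r - t) = r from by ring] at h2
  have h2' : IsRiemannIntegral (fun s => T (r - s) (B (g s))) (r - t) r yt := by
    refine h2.congr_fun (by linarith) (fun s hs => ?_)
    have hgs : g s = f (s - (r - t)) := by
      show f (max 0 (s - (r - t))) = f (s - (r - t))
      rw [max_eq_right (by linarith [hs.1])]
    show T (t - (s + -(r - t))) (B (f (s + -(r - t)))) = T (r - s) (B (g s))
    rw [show s + -(r - t) = s - (r - t) from by ring, hgs,
      show t - (s - (r - t)) = r - s from by ring]
  -- conclude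
  have hsum : Y = T t Je + yt :=
    IsRiemannIntegral.additivity he0 (by linarith) h1' h2' hY
  have hhyp := hyp g hg
  have hYval : sgConv T (fun s => B (g s)) r = Y := riemannIntegral_eq (le_of_lt hr) hY
  rw [hYval, hsum] at hhyp
  have hTt : T t Je ∈ genDomain T := genDomain_mapT hT ht0 hJmem
  have hyt' : yt = (T t Je + yt) - T t Je := by abel
  rw [hval, hyt']
  exact genDomain_sub hhyp hTt

theorem conv_r0 (hX : SequentiallyComplete X) (hT : IsSCLESemigroup T) {r : ℝ} (hr : 0 < r)
    (hyp : ∀ f : ℝ → U, ContinuousOn f (Set.Icc 0 r) →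
      sgConv T (fun s => B (f s)) r ∈ genDomain T)
    {r₀ : ℝ} (hr₀ : 0 < r₀) (hle : r₀ ≤ r) {f : ℝ → U}
    (hf : ContinuousOn f (Set.Icc 0 r₀)) :
    sgConv T (fun s => B (f s)) r₀ ∈ genDomain T := by
  set f' : ℝ → U := fun s => f (min s r₀) with hf'def
  have hf' : ContinuousOn f' (Set.Icc 0 r) := by
    refine hf.comp ((continuous_id.min continuous_const).continuousOn) ?_
    intro s hs
    exact ⟨le_min hs.1 (le_of_lt hr₀), min_le_right _ _⟩
  have hmem := part_a hX hT hr hyp hf' (t := r₀) ⟨le_of_lt hr₀, hle⟩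
  have hcong : riemannIntegral (fun s => T (r₀ - s) (B (f' s))) 0 r₀
      = riemannIntegral (fun s => T (r₀ - s) (B (f s))) 0 r₀ := by
    refine riemannIntegral_congr (le_of_lt hr₀) (fun s hs => ?_)
    have : f' s = f s := by
      show f (min s r₀) = f s
      rw [min_eq_left hs.2]
    rw [this]
  show riemannIntegral (fun s => T (r₀ - s) (B (f s))) 0 r₀ ∈ genDomain T
  rw [← hcong]
  exact hmem

theorem part_b (hX : SequentiallyComplete X) (hT : IsSCLESemigroup T) {r : ℝ} (hr : 0 < r)
    (hyp : ∀ f : ℝ → U, ContinuousOn f (Set.Icc 0 r) →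
      sgConv T (fun s => B (f s)) r ∈ genDomain T) :
    ∀ k : ℕ, ∀ r₀ : ℝ, 0 < r₀ → r₀ ≤ ((k:ℝ) + 1) * r → ∀ f : ℝ → U,
      ContinuousOn f (Set.Icc 0 r₀) → sgConv T (fun s => B (f s)) r₀ ∈ genDomain T := by
  intro k
  induction k with
  | zero =>
    intro r₀ hr₀ hle f hf
    rw [Nat.cast_zero, zero_add, one_mul] at hle
    exact conv_r0 hX hT hr hyp hr₀ hle hf
  | succ k ih =>
    intro r₀ hr₀ hle f hf
    by_cases hcase : r₀ ≤ ((k:ℝ) + 1) * r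
    · exact ih r₀ hr₀ hcase f hf
    push_neg at hcase
    have hkr : (0:ℝ) ≤ (k:ℝ) * r := by positivity
    set t' := r₀ - r with ht'
    have ht'pos : 0 < t' := by
      have : r ≤ ((k:ℝ) + 1) * r := by nlinarith
      rw [ht']
      linarith
    have ht'le : t' ≤ ((k:ℝ) + 1) * r := by
      push_cast at hle
      rw [ht']
      linarith
    have hr₀r : t' + r = r₀ := by rw [ht']; ring
    -- piece at t'
    have hft' : ContinuousOn f (Set.Icc 0 t') :=
      hf.mono (Set.Icc_subset_Icc le_rfl (by linarith))
    have hBf : ContinuousOn (fun s => B (f s)) (Set.Icc 0 t') :=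
      B.continuous.comp_continuousOn hft'
    obtain ⟨yt, hyt⟩ := exists_isRiemannIntegral hX (le_of_lt ht'pos)
      (conv_integrand_continuous hT (le_of_lt ht'pos) hBf)
    have hytval : sgConv T (fun s => B (f s)) t' = yt :=
      riemannIntegral_eq (le_of_lt ht'pos) hyt
    have hytmem : yt ∈ genDomain T := by
      rw [← hytval]
      exact ih t' ht'pos ht'le f hft'
    have h1 : IsRiemannIntegral (fun s => T (r₀ - s) (B (f s))) 0 t' (T r yt) := by
      refine (hyt.map (T r)).congr_fun (le_of_lt ht'pos) (fun s hs => ?_)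
      have hcomp := hT.2.1 r (t' - s) (le_of_lt hr) (by linarith [hs.2])
      rw [show r + (t' - s) = r₀ - s from by rw [ht']; ring] at hcomp
      show T r (T (t' - s) (B (f s))) = T (r₀ - s) (B (f s))
      rw [hcomp]
      rfl
    -- piece on [t', r₀]
    have hf₂ : ContinuousOn (fun σ => f (σ + t')) (Set.Icc 0 r) := by
      refine hf.comp ((continuous_id.add continuous_const).continuousOn) ?_
      intro s hs
      constructor
      · show (0:ℝ) ≤ s + t'
        linarith [hs.1]
      · show s + t' ≤ r₀
        rw [← hr₀r]
        linarith [hs.2]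
    obtain ⟨Yz, hYz⟩ := exists_isRiemannIntegral hX (le_of_lt hr)
      (conv_integrand_continuous hT (le_of_lt hr) (B.continuous.comp_continuousOn hf₂))
    have hYzval : sgConv T (fun s => B (f (s + t'))) r = Yz := riemannIntegral_eq (le_of_lt hr) hYz
    have hYzmem : Yz ∈ genDomain T := by
      rw [← hYzval]
      exact hyp _ hf₂
    have h2 := hYz.translate (-t')
    rw [show (0:ℝ) - -t' = t' from by ring,
      show r - -t' = r₀ from by rw [← hr₀r]; ring] at h2
    have h2' : IsRiemannIntegral (fun s => T (r₀ - s) (B (f s))) t' r₀ Yz := by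
      refine h2.congr_fun (by linarith) (fun s hs => ?_)
      show T (r - (s + -t')) (B (f ((s + -t') + t'))) = T (r₀ - s) (B (f s))
      rw [show s + -t' + t' = s from by ring,
        show r - (s + -t') = r₀ - s from by rw [← hr₀r]; ring]
    obtain ⟨Y, hY⟩ := exists_isRiemannIntegral hX (le_of_lt hr₀)
      (conv_integrand_continuous hT (le_of_lt hr₀) (B.continuous.comp_continuousOn hf))
    have hsum : Y = T r yt + Yz :=
      IsRiemannIntegral.additivity (le_of_lt ht'pos) (by linarith) h1 h2' hY
    have hYval : sgConv T (fun s => B (f s)) r₀ = Y := riemannIntegral_eq (le_of_lt hr₀) hY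
    rw [hYval, hsum]
    exact genDomain_add (genDomain_mapT hT (le_of_lt hr) hytmem) hYzmem

end SG4

theorem stmt10 {X U : Type*} [AddCommGroup X] [Module ℝ X] [UniformSpace X] [IsUniformAddGroup X]
    [ContinuousSMul ℝ X] [LocallyConvexSpace ℝ X] [T2Space X]
    [AddCommGroup U] [Module ℝ U] [UniformSpace U] [IsUniformAddGroup U]
    [ContinuousSMul ℝ U] [LocallyConvexSpace ℝ U] [T2Space U]
    (hX : SequentiallyComplete X)
    (T : ℝ → X →L[ℝ] X) (hT : IsSCLESemigroup T)
    (B : U →L[ℝ] X) :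
    (∀ r : ℝ, 0 < r →
      (∀ f : ℝ → U, ContinuousOn f (Set.Icc (0:ℝ) r) →
        sgConv T (fun s => B (f s)) r ∈ genDomain T) →
      ∀ f : ℝ → U, ContinuousOn f (Set.Icc (0:ℝ) r) →
        ∀ t ∈ Set.Icc (0:ℝ) r, sgConv T (fun s => B (f s)) t ∈ genDomain T) ∧
    (∀ r : ℝ, 0 < r →
      (∀ f : ℝ → U, ContinuousOn f (Set.Icc (0:ℝ) r) →
        sgConv T (fun s => B (f s)) r ∈ genDomain T) →
      ∀ r₀ : ℝ, 0 < r₀ →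
        ∀ f : ℝ → U, ContinuousOn f (Set.Icc (0:ℝ) r₀) →
          sgConv T (fun s => B (f s)) r₀ ∈ genDomain T) := by
  constructor
  · intro r hr hyp f hf t ht
    exact part_a hX hT hr hyp hf ht
  · intro r hr hyp r₀ hr₀ f hf
    obtain ⟨k, hk⟩ := exists_nat_ge (r₀ / r)
    have hle : r₀ ≤ ((k:ℝ) + 1) * r := by
      rw [div_le_iff₀ hr] at hk
      nlinarith
    exact part_b hX hT hr hyp k r₀ hr₀ hle f hf
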